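/- arXiv:1809.02294 — 11 statements merged into one kernel-verified Lean document; each statement's English description precedes it below -/
import Mathlib

section
/- Let 0 < p < 1. Then p·log 3/(4−p) ≤ E[log X] ≤ p·log 3/2, where X is a positive random variable whose law is the invariant distribution of the Bernoulli(p) random Fibonacci matrix model, characterized by the distributional identity X ~ 1/X + ε. -/
open MeasureTheory ProbabilityTheory Real

/-- Bounds on the Lyapunov exponent `λ(p) = E[log X]` for the Bernoulli(p)
random Fibonacci matrix model: `p·log 3/(4−p) ≤ E[log X] ≤ p·log 3/2`. -/
theorem bernoulli_p_lyapunov_bounds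
    {Ω : Type*} [MeasureSpace Ω] [IsProbabilityMeasure (ℙ : Measure Ω)]
    (p : ℝ) (hp0 : 0 < p) (hp1 : p < 1)
    (X ε : Ω → ℝ) (hXm : Measurable X) (hεm : Measurable ε)
    (hXpos : ∀ᵐ ω ∂ℙ, 0 < X ω)
    (hatomless : ∀ c : ℝ, ℙ {ω | X ω = c} = 0)
    (hε1 : ℙ {ω | ε ω = 1} = ENNReal.ofReal p)
    (hε0 : ℙ {ω | ε ω = 0} = ENNReal.ofReal (1 - p))
    (hindep : IndepFun X ε ℙ)
    (hdist : Measure.map X ℙ = Measure.map (fun ω => 1 / X ω + ε ω) ℙ)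
    (hint1 : Integrable (fun ω => Real.log (X ω)) ℙ)
    (hint2 : Integrable (fun ω => Real.log (1 + X ω)) ℙ)
    (hint3 : Integrable (fun ω => Real.log (1 + 2 * X ω)) ℙ) :
    p * Real.log 3 / (4 - p) ≤ ∫ ω, Real.log (X ω) ∂ℙ ∧
      ∫ ω, Real.log (X ω) ∂ℙ ≤ p * Real.log 3 / 2 := by
  have hp1' : (0:ℝ) ≤ 1 - p := by linarith
  -- almost surely ε ∈ {0, 1}
  have hs0 : MeasurableSet {ω | ε ω = 0} := hεm (measurableSet_singleton 0)
  have hs1 : MeasurableSet {ω | ε ω = 1} := hεm (measurableSet_singleton 1)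
  have hεae : ∀ᵐ ω ∂ℙ, ε ω = 0 ∨ ε ω = 1 := by
    have hdisj : Disjoint {ω | ε ω = 0} {ω | ε ω = 1} := by
      rw [Set.disjoint_left]
      intro ω h0 h1
      simp only [Set.mem_setOf_eq] at h0 h1
      rw [h0] at h1; norm_num at h1
    have hu : ℙ ({ω | ε ω = 0} ∪ {ω | ε ω = 1}) = 1 := by
      rw [measure_union hdisj hs1, hε0, hε1, ← ENNReal.ofReal_add hp1' hp0.le]
      norm_num
    have hc : ℙ ({ω | ε ω = 0} ∪ {ω | ε ω = 1})ᶜ = 0 := by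
      rw [measure_compl (hs0.union hs1) (measure_ne_top _ _), hu]
      simp
    rw [MeasureTheory.ae_iff]
    have hset : {ω | ¬(ε ω = 0 ∨ ε ω = 1)} = ({ω | ε ω = 0} ∪ {ω | ε ω = 1})ᶜ := by
      ext ω; simp [not_or]
    rw [hset]; exact hc
  -- key transfer identity
  have hY : Measurable (fun ω => 1 / X ω + ε ω) :=
    (measurable_const.div hXm).add hεm
  have key : ∀ g : ℝ → ℝ, Measurable g →
      Integrable (fun ω => g (1 / X ω)) ℙ →
      Integrable (fun ω => g (1 / X ω + 1)) ℙ →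
      ∫ ω, g (X ω) ∂ℙ =
        (1 - p) * ∫ ω, g (1 / X ω) ∂ℙ + p * ∫ ω, g (1 / X ω + 1) ∂ℙ := by
    intro g hg hInt0 hInt1
    have h1 : ∫ ω, g (X ω) ∂ℙ = ∫ ω, g (1 / X ω + ε ω) ∂ℙ := by
      rw [← integral_map hXm.aemeasurable hg.aestronglyMeasurable, hdist,
        integral_map hY.aemeasurable hg.aestronglyMeasurable]
    set χ0 : Ω → ℝ := fun ω => if ε ω = 0 then 1 else 0 with hχ0
    set χ1 : Ω → ℝ := fun ω => if ε ω = 1 then 1 else 0 with hχ1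
    have hχ0m : Measurable χ0 :=
      Measurable.ite (hεm (measurableSet_singleton 0)) measurable_const measurable_const
    have hχ1m : Measurable χ1 :=
      Measurable.ite (hεm (measurableSet_singleton 1)) measurable_const measurable_const
    have hae : (fun ω => g (1 / X ω + ε ω)) =ᵐ[ℙ]
        fun ω => χ0 ω * g (1 / X ω) + χ1 ω * g (1 / X ω + 1) := by
      filter_upwards [hεae] with ω hω
      rcases hω with h | h <;> simp [hχ0, hχ1, h]
    have hbdd0 : ∀ ω, ‖χ0 ω‖ ≤ 1 := by
      intro ω; simp only [hχ0]; split <;> simp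
    have hbdd1 : ∀ ω, ‖χ1 ω‖ ≤ 1 := by
      intro ω; simp only [hχ1]; split <;> simp
    have hI0 : Integrable (fun ω => χ0 ω * g (1 / X ω)) ℙ :=
      hInt0.bdd_mul hχ0m.aestronglyMeasurable (ae_of_all _ hbdd0)
    have hI1 : Integrable (fun ω => χ1 ω * g (1 / X ω + 1)) ℙ :=
      hInt1.bdd_mul hχ1m.aestronglyMeasurable (ae_of_all _ hbdd1)
    -- independence of the factors
    have hind0 : IndepFun χ0 (fun ω => g (1 / X ω)) ℙ := by
      have : IndepFun ((fun x : ℝ => if x = 0 then (1:ℝ) else 0) ∘ ε)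
          ((fun x : ℝ => g (1 / x)) ∘ X) ℙ :=
        hindep.symm.comp
          (Measurable.ite (measurableSet_singleton 0) measurable_const measurable_const)
          (hg.comp (measurable_const.div measurable_id))
      exact this
    have hind1 : IndepFun χ1 (fun ω => g (1 / X ω + 1)) ℙ := by
      have : IndepFun ((fun x : ℝ => if x = 1 then (1:ℝ) else 0) ∘ ε)
          ((fun x : ℝ => g (1 / x + 1)) ∘ X) ℙ :=
        hindep.symm.comp
          (Measurable.ite (measurableSet_singleton 1) measurable_const measurable_const)
          (hg.comp ((measurable_const.div measurable_id).add measurable_const))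
      exact this
    have hχ0int : Integrable χ0 ℙ := by
      refine (integrable_const (1:ℝ)).mono' hχ0m.aestronglyMeasurable ?_
      filter_upwards with ω using hbdd0 ω
    have hχ1int : Integrable χ1 ℙ := by
      refine (integrable_const (1:ℝ)).mono' hχ1m.aestronglyMeasurable ?_
      filter_upwards with ω using hbdd1 ω
    have hm0 : ∫ ω, χ0 ω * g (1 / X ω) ∂ℙ =
        (∫ ω, χ0 ω ∂ℙ) * ∫ ω, g (1 / X ω) ∂ℙ := by
      have := hind0.integral_mul_eq_mul_integral hχ0int.aestronglyMeasurable hInt0.aestronglyMeasurable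
      simpa [Pi.mul_apply] using this
    have hm1 : ∫ ω, χ1 ω * g (1 / X ω + 1) ∂ℙ =
        (∫ ω, χ1 ω ∂ℙ) * ∫ ω, g (1 / X ω + 1) ∂ℙ := by
      have := hind1.integral_mul_eq_mul_integral hχ1int.aestronglyMeasurable hInt1.aestronglyMeasurable
      simpa [Pi.mul_apply] using this
    have hint_χ0 : ∫ ω, χ0 ω ∂ℙ = 1 - p := by
      have : χ0 = Set.indicator {ω | ε ω = 0} (fun _ => (1:ℝ)) := by
        ext ω; simp [hχ0, Set.indicator_apply]
      rw [this, integral_indicator_const _ hs0, measureReal_def, hε0]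
      simp [ENNReal.toReal_ofReal hp1']
    have hint_χ1 : ∫ ω, χ1 ω ∂ℙ = p := by
      have : χ1 = Set.indicator {ω | ε ω = 1} (fun _ => (1:ℝ)) := by
        ext ω; simp [hχ1, Set.indicator_apply]
      rw [this, integral_indicator_const _ hs1, measureReal_def, hε1]
      simp [ENNReal.toReal_ofReal hp0.le]
    rw [h1, integral_congr_ae hae, integral_add hI0 hI1, hm0, hm1, hint_χ0, hint_χ1]
  -- notation
  set I := ∫ ω, Real.log (X ω) ∂ℙ with hI
  set A := ∫ ω, Real.log (1 + X ω) ∂ℙ with hA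
  set B := ∫ ω, Real.log (1 + 2 * X ω) ∂ℙ with hB
  set M := ∫ ω, max (Real.log (X ω)) 0 ∂ℙ with hM
  set N := ∫ ω, max (-Real.log (X ω)) 0 ∂ℙ with hN
  -- a.e. rewrites
  have hlog_inv : (fun ω => Real.log (1 / X ω)) = fun ω => -Real.log (X ω) := by
    funext ω; rw [one_div, Real.log_inv]
  have hlog_inv1 : (fun ω => Real.log (1 / X ω + 1)) =ᵐ[ℙ]
      fun ω => Real.log (1 + X ω) - Real.log (X ω) := by
    filter_upwards [hXpos] with ω hω
    rw [show 1 / X ω + 1 = (1 + X ω) / X ω by field_simp,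
      Real.log_div (by positivity) hω.ne']
  have hlog_inv2 : (fun ω => Real.log (1 + 1 / X ω)) =ᵐ[ℙ]
      fun ω => Real.log (1 + X ω) - Real.log (X ω) := by
    filter_upwards [hXpos] with ω hω
    rw [show 1 + 1 / X ω = (1 + X ω) / X ω by field_simp; ring,
      Real.log_div (by positivity) hω.ne']
  have hlog_inv3 : (fun ω => Real.log (1 + (1 / X ω + 1))) =ᵐ[ℙ]
      fun ω => Real.log (1 + 2 * X ω) - Real.log (X ω) := by
    filter_upwards [hXpos] with ω hω
    rw [show 1 + (1 / X ω + 1) = (1 + 2 * X ω) / X ω by field_simp; ring,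
      Real.log_div (by positivity) hω.ne']
  -- equation (1): with g = log
  have e1 : I = (1 - p) * (-I) + p * (A - I) := by
    have h := key Real.log Real.measurable_log
      (by rw [hlog_inv]; exact hint1.neg)
      ((hint2.sub hint1).congr hlog_inv1.symm)
    rw [hlog_inv, integral_neg, integral_congr_ae hlog_inv1,
      integral_sub hint2 hint1] at h
    rw [hI, hA]; exact h
  -- equation (2): with g = log (1 + ·)
  have e2 : A = (1 - p) * (A - I) + p * (B - I) := by
    have h := key (fun x => Real.log (1 + x))
      (Real.measurable_log.comp (measurable_const.add measurable_id))
      ((hint2.sub hint1).congr hlog_inv2.symm)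
      ((hint3.sub hint1).congr hlog_inv3.symm)
    beta_reduce at h
    rw [integral_congr_ae hlog_inv2, integral_congr_ae hlog_inv3,
      integral_sub hint2 hint1, integral_sub hint3 hint1] at h
    rw [hA, hB, hI]; exact h
  -- equation (3): with g = negative part of log
  have e3 : N = (1 - p) * M := by
    have hgm : Measurable (fun x : ℝ => max (-Real.log x) 0) :=
      Real.measurable_log.neg.max measurable_const
    have heq0 : (fun ω => max (-Real.log (1 / X ω)) 0) =
        fun ω => max (Real.log (X ω)) 0 := by
      funext ω; rw [one_div, Real.log_inv, neg_neg]
    have heq1 : (fun ω => max (-Real.log (1 / X ω + 1)) 0) =ᵐ[ℙ]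
        fun _ => (0:ℝ) := by
      filter_upwards [hXpos] with ω hω
      have h1 : (1:ℝ) ≤ 1 / X ω + 1 := by
        have : 0 < 1 / X ω := by positivity
        linarith
      have h2 : 0 ≤ Real.log (1 / X ω + 1) := Real.log_nonneg h1
      exact max_eq_right (by linarith)
    have h := key (fun x => max (-Real.log x) 0) hgm
      (by rw [heq0]; exact hint1.pos_part)
      ((integrable_const (0:ℝ)).congr heq1.symm)
    beta_reduce at h
    rw [heq0, integral_congr_ae heq1, integral_zero, mul_zero, add_zero] at h
    rw [hN, hM]; exact h
  -- equation (4): M - N = I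
  have e4 : M - N = I := by
    rw [hM, hN, ← integral_sub hint1.pos_part hint1.neg_part, hI]
    apply integral_congr_ae
    filter_upwards with ω
    exact max_zero_sub_max_neg_zero_eq_self _
  -- inequality: B ≤ log 3 + M
  have ineq1 : B ≤ Real.log 3 + M := by
    have hmono : B ≤ ∫ ω, (Real.log 3 + max (Real.log (X ω)) 0) ∂ℙ := by
      rw [hB]
      apply integral_mono_ae hint3 ((integrable_const _).add hint1.pos_part)
      filter_upwards [hXpos] with ω hω
      simp only [Pi.add_apply]
      rcases le_total (X ω) 1 with h | h
      · have h1 : Real.log (1 + 2 * X ω) ≤ Real.log 3 :=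
          Real.log_le_log (by positivity) (by linarith)
        have h2 : (0:ℝ) ≤ max (Real.log (X ω)) 0 := le_max_right _ _
        linarith
      · have h1 : Real.log (1 + 2 * X ω) ≤ Real.log (3 * X ω) :=
          Real.log_le_log (by positivity) (by linarith)
        rw [Real.log_mul (by norm_num) (by linarith)] at h1
        have h2 : Real.log (X ω) ≤ max (Real.log (X ω)) 0 := le_max_left _ _
        linarith
    rwa [integral_add (integrable_const _) hint1.pos_part, integral_const,
      probReal_univ, one_smul, ← hM] at hmono
  -- inequality: log 3 - N ≤ B
  have ineq2 : Real.log 3 - N ≤ B := by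
    have hmono : ∫ ω, (Real.log 3 - max (-Real.log (X ω)) 0) ∂ℙ ≤ B := by
      rw [hB]
      apply integral_mono_ae ((integrable_const _).sub hint1.neg_part) hint3
      filter_upwards [hXpos] with ω hω
      simp only [Pi.sub_apply]
      rcases le_total (X ω) 1 with h | h
      · have h1 : Real.log (3 * X ω) ≤ Real.log (1 + 2 * X ω) :=
          Real.log_le_log (by positivity) (by linarith)
        rw [Real.log_mul (by norm_num) hω.ne'] at h1
        have h2 : -Real.log (X ω) ≤ max (-Real.log (X ω)) 0 := le_max_left _ _
        linarith
      · have h1 : Real.log 3 ≤ Real.log (1 + 2 * X ω) :=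
          Real.log_le_log (by norm_num) (by linarith)
        have h2 : (0:ℝ) ≤ max (-Real.log (X ω)) 0 := le_max_right _ _
        linarith
    rwa [integral_sub (integrable_const _) hint1.neg_part, integral_const,
      probReal_univ, one_smul, ← hN] at hmono
  -- algebra
  have hpA : p * A = 2 * I := by linear_combination -e1
  have hpB : p * B = 3 * I := by linear_combination hpA - e2
  have hpM : p * M = I := by linear_combination e4 + e3
  constructor
  · rw [div_le_iff₀ (by linarith : (0:ℝ) < 4 - p)]
    nlinarith [mul_le_mul_of_nonneg_left ineq2 hp0.le]
  · rw [le_div_iff₀ (by norm_num : (0:ℝ) < 2)]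
    nlinarith [mul_le_mul_of_nonneg_left ineq1 hp0.le]
end

section
/- Let 0 < p < 1 and let X be a positive random variable satisfying the distributional identity X ~ 1/X + ε with ε ~ Bernoulli(p) independent of X. Then E[log X] = (p/3)·E[log(2X + 1)]. -/
open MeasureTheory ProbabilityTheory Real

/-- For the Bernoulli(p) invariant distribution `X ~ 1/X + ε`:
`E[log X] = (p/3)·E[log(2X + 1)]`. -/
theorem bernoulli_p_log_identity_two
    {Ω : Type*} [MeasureSpace Ω] [IsProbabilityMeasure (ℙ : Measure Ω)]
    (p : ℝ) (hp0 : 0 < p) (hp1 : p < 1)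
    (X ε : Ω → ℝ) (hXm : Measurable X) (hεm : Measurable ε)
    (hXpos : ∀ᵐ ω ∂ℙ, 0 < X ω)
    (hε1 : ℙ {ω | ε ω = 1} = ENNReal.ofReal p)
    (hε0 : ℙ {ω | ε ω = 0} = ENNReal.ofReal (1 - p))
    (hindep : IndepFun X ε ℙ)
    (hdist : Measure.map X ℙ = Measure.map (fun ω => 1 / X ω + ε ω) ℙ)
    (hint1 : Integrable (fun ω => Real.log (X ω)) ℙ)
    (hint2 : Integrable (fun ω => Real.log (1 + X ω)) ℙ)
    (hint3 : Integrable (fun ω => Real.log (1 + 2 * X ω)) ℙ) :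
    ∫ ω, Real.log (X ω) ∂ℙ = (p / 3) * ∫ ω, Real.log (2 * X ω + 1) ∂ℙ := by
  have hp1' : (0:ℝ) ≤ 1 - p := by linarith
  have hs0 : MeasurableSet {ω | ε ω = 0} := hεm (measurableSet_singleton 0)
  have hs1 : MeasurableSet {ω | ε ω = 1} := hεm (measurableSet_singleton 1)
  -- ε ∈ {0,1} a.s.
  have hε01 : ∀ᵐ ω ∂ℙ, ε ω = 0 ∨ ε ω = 1 := by
    have hdisj : Disjoint {ω | ε ω = 0} {ω | ε ω = 1} := by
      rw [Set.disjoint_left]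
      intro a h0 h1
      simp only [Set.mem_setOf_eq] at h0 h1
      rw [h0] at h1; norm_num at h1
    have hu : ℙ ({ω | ε ω = 0} ∪ {ω | ε ω = 1}) = 1 := by
      rw [measure_union hdisj hs1, hε0, hε1, ← ENNReal.ofReal_add hp1' hp0.le]
      norm_num
    rw [ae_iff]
    have hset : {ω | ¬(ε ω = 0 ∨ ε ω = 1)} = ({ω | ε ω = 0} ∪ {ω | ε ω = 1})ᶜ := by
      ext ω; simp [not_or]
    rw [hset, measure_compl (hs0.union hs1) (measure_ne_top _ _), hu, measure_univ, tsub_self]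
  -- indicator functions of ε
  set φ0 : ℝ → ℝ := fun x => if x = 0 then 1 else 0 with hφ0
  set φ1 : ℝ → ℝ := fun x => if x = 1 then 1 else 0 with hφ1
  have hφ0m : Measurable φ0 := measurable_const.ite (measurableSet_singleton 0) measurable_const
  have hφ1m : Measurable φ1 := measurable_const.ite (measurableSet_singleton 1) measurable_const
  have hint_g0 : ∫ ω, φ0 (ε ω) ∂ℙ = 1 - p := by
    have : (fun ω => φ0 (ε ω)) = Set.indicator {ω | ε ω = 0} (fun _ => (1:ℝ)) := by
      funext ω; simp [hφ0, Set.indicator_apply, Set.mem_setOf_eq]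
    rw [this, integral_indicator_const (1:ℝ) hs0, measureReal_def, hε0, ENNReal.toReal_ofReal hp1']
    simp
  have hint_g1 : ∫ ω, φ1 (ε ω) ∂ℙ = p := by
    have : (fun ω => φ1 (ε ω)) = Set.indicator {ω | ε ω = 1} (fun _ => (1:ℝ)) := by
      funext ω; simp [hφ1, Set.indicator_apply, Set.mem_setOf_eq]
    rw [this, integral_indicator_const (1:ℝ) hs1, measureReal_def, hε1, ENNReal.toReal_ofReal hp0.le]
    simp
  -- key splitting lemma
  have key : ∀ f : ℝ → ℝ, Measurable f →
      Integrable (fun ω => f (1 / X ω)) ℙ →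
      Integrable (fun ω => f (1 / X ω + 1)) ℙ →
      ∫ ω, f (X ω) ∂ℙ
        = (1 - p) * ∫ ω, f (1 / X ω) ∂ℙ + p * ∫ ω, f (1 / X ω + 1) ∂ℙ := by
    intro f hf hi0 hi1
    have hYm : Measurable (fun ω => 1 / X ω + ε ω) := (measurable_const.div hXm).add hεm
    have h1 : ∫ ω, f (X ω) ∂ℙ = ∫ ω, f (1 / X ω + ε ω) ∂ℙ := by
      rw [← integral_map hXm.aemeasurable hf.aestronglyMeasurable, hdist,
        integral_map hYm.aemeasurable hf.aestronglyMeasurable]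
    have hF0m : Measurable fun x : ℝ => f (1 / x) := hf.comp (measurable_const.div measurable_id)
    have hF1m : Measurable fun x : ℝ => f (1 / x + 1) :=
      hf.comp ((measurable_const.div measurable_id).add measurable_const)
    have hI0 : Integrable (fun ω => φ0 (ε ω) * f (1 / X ω)) ℙ := by
      refine hi0.bdd_mul (c := 1) ((hφ0m.comp hεm).aestronglyMeasurable) (Filter.Eventually.of_forall fun ω => ?_)
      simp only [hφ0]
      split_ifs <;> norm_num
    have hI1 : Integrable (fun ω => φ1 (ε ω) * f (1 / X ω + 1)) ℙ := by
      refine hi1.bdd_mul (c := 1) ((hφ1m.comp hεm).aestronglyMeasurable) (Filter.Eventually.of_forall fun ω => ?_)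
      simp only [hφ1]
      split_ifs <;> norm_num
    have hae : (fun ω => f (1 / X ω + ε ω))
        =ᵐ[ℙ] fun ω => φ0 (ε ω) * f (1 / X ω) + φ1 (ε ω) * f (1 / X ω + 1) := by
      filter_upwards [hε01] with ω h
      rcases h with h | h <;> simp [hφ0, hφ1, h]
    have hmul0 : ∫ ω, φ0 (ε ω) * f (1 / X ω) ∂ℙ = (1 - p) * ∫ ω, f (1 / X ω) ∂ℙ := by
      have h := (hindep.symm.comp hφ0m hF0m).integral_mul_eq_mul_integral ((hφ0m.comp hεm).aestronglyMeasurable)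
        ((hF0m.comp hXm).aestronglyMeasurable)
      have h2 : (∫ ω, φ0 (ε ω) * f (1 / X ω) ∂ℙ)
          = (∫ ω, φ0 (ε ω) ∂ℙ) * ∫ ω, f (1 / X ω) ∂ℙ := h
      rw [h2, hint_g0]
    have hmul1 : ∫ ω, φ1 (ε ω) * f (1 / X ω + 1) ∂ℙ = p * ∫ ω, f (1 / X ω + 1) ∂ℙ := by
      have h := (hindep.symm.comp hφ1m hF1m).integral_mul_eq_mul_integral ((hφ1m.comp hεm).aestronglyMeasurable)
        ((hF1m.comp hXm).aestronglyMeasurable)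
      have h2 : (∫ ω, φ1 (ε ω) * f (1 / X ω + 1) ∂ℙ)
          = (∫ ω, φ1 (ε ω) ∂ℙ) * ∫ ω, f (1 / X ω + 1) ∂ℙ := h
      rw [h2, hint_g1]
    rw [h1, integral_congr_ae hae, integral_add hI0 hI1, hmul0, hmul1]
  -- first application: f = log
  have e0 : (fun ω => Real.log (1 / X ω)) =ᵐ[ℙ] fun ω => -Real.log (X ω) := by
    filter_upwards [hXpos] with ω h
    rw [one_div, Real.log_inv]
  have e1 : (fun ω => Real.log (1 / X ω + 1))
      =ᵐ[ℙ] fun ω => Real.log (1 + X ω) - Real.log (X ω) := by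
    filter_upwards [hXpos] with ω h
    have hx : X ω ≠ 0 := h.ne'
    have : 1 / X ω + 1 = (1 + X ω) / X ω := by field_simp
    rw [this, Real.log_div (by positivity) hx]
  have eq1 : ∫ ω, Real.log (X ω) ∂ℙ
      = (1 - p) * (-∫ ω, Real.log (X ω) ∂ℙ)
        + p * ((∫ ω, Real.log (1 + X ω) ∂ℙ) - ∫ ω, Real.log (X ω) ∂ℙ) := by
    have h := key Real.log Real.measurable_log
      (hint1.neg.congr e0.symm) ((hint2.sub hint1).congr e1.symm)
    rw [integral_congr_ae e0, integral_congr_ae e1, integral_neg,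
      integral_sub hint2 hint1] at h
    exact h
  -- second application: f = log (1 + ·)
  have hfm2 : Measurable fun x : ℝ => Real.log (1 + x) :=
    Real.measurable_log.comp (measurable_const.add measurable_id)
  have e0' : (fun ω => Real.log (1 + 1 / X ω))
      =ᵐ[ℙ] fun ω => Real.log (1 + X ω) - Real.log (X ω) := by
    filter_upwards [hXpos] with ω h
    have hx : X ω ≠ 0 := h.ne'
    have : 1 + 1 / X ω = (1 + X ω) / X ω := by field_simp; ring
    rw [this, Real.log_div (by positivity) hx]
  have e1' : (fun ω => Real.log (1 + (1 / X ω + 1)))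
      =ᵐ[ℙ] fun ω => Real.log (1 + 2 * X ω) - Real.log (X ω) := by
    filter_upwards [hXpos] with ω h
    have hx : X ω ≠ 0 := h.ne'
    have : 1 + (1 / X ω + 1) = (1 + 2 * X ω) / X ω := by field_simp; ring
    rw [this, Real.log_div (by positivity) hx]
  have eq2 : ∫ ω, Real.log (1 + X ω) ∂ℙ
      = (1 - p) * ((∫ ω, Real.log (1 + X ω) ∂ℙ) - ∫ ω, Real.log (X ω) ∂ℙ)
        + p * ((∫ ω, Real.log (1 + 2 * X ω) ∂ℙ) - ∫ ω, Real.log (X ω) ∂ℙ) := by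
    have h := key (fun x => Real.log (1 + x)) hfm2
      ((hint2.sub hint1).congr e0'.symm) ((hint3.sub hint1).congr e1'.symm)
    rw [integral_congr_ae e0', integral_congr_ae e1',
      integral_sub hint2 hint1, integral_sub hint3 hint1] at h
    exact h
  have hBB : ∫ ω, Real.log (2 * X ω + 1) ∂ℙ = ∫ ω, Real.log (1 + 2 * X ω) ∂ℙ := by
    congr 1; funext ω; rw [add_comm]
  rw [hBB]
  linear_combination (1/3 : ℝ) * eq1 + (1/3 : ℝ) * eq2
end

section
/- Let 0 < p < 1 and let X be a positive random variable satisfying the distributional identity X ~ 1/X + ε with ε ~ Bernoulli(p) independent of X. Then E[log X] = (p/2)·E[log(1 + X)]. -/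
open MeasureTheory ProbabilityTheory Real

/-- For the Bernoulli(p) invariant distribution `X ~ 1/X + ε`:
`E[log X] = (p/2)·E[log(1 + X)]`. -/
theorem bernoulli_p_log_identity_one
    {Ω : Type*} [MeasureSpace Ω] [IsProbabilityMeasure (ℙ : Measure Ω)]
    (p : ℝ) (hp0 : 0 < p) (hp1 : p < 1)
    (X ε : Ω → ℝ) (hXm : Measurable X) (hεm : Measurable ε)
    (hXpos : ∀ᵐ ω ∂ℙ, 0 < X ω)
    (hε1 : ℙ {ω | ε ω = 1} = ENNReal.ofReal p)
    (hε0 : ℙ {ω | ε ω = 0} = ENNReal.ofReal (1 - p))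
    (hindep : IndepFun X ε ℙ)
    (hdist : Measure.map X ℙ = Measure.map (fun ω => 1 / X ω + ε ω) ℙ)
    (hint1 : Integrable (fun ω => Real.log (X ω)) ℙ)
    (hint2 : Integrable (fun ω => Real.log (1 + X ω)) ℙ) :
    ∫ ω, Real.log (X ω) ∂ℙ = (p / 2) * ∫ ω, Real.log (1 + X ω) ∂ℙ := by
  set A : Set Ω := {ω | ε ω = 1} with hAdef
  set B : Set Ω := {ω | ε ω = 0} with hBdef
  have hA : MeasurableSet A := hεm (measurableSet_singleton 1)
  have hB : MeasurableSet B := hεm (measurableSet_singleton 0)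
  -- a.e. ε ∈ {0, 1}
  have hdisj : Disjoint A B := by
    rw [Set.disjoint_left]
    intro ω h1 h0
    simp only [hAdef, hBdef, Set.mem_setOf_eq] at h1 h0
    rw [h1] at h0; norm_num at h0
  have hunion : ℙ (A ∪ B) = 1 := by
    rw [measure_union hdisj hB, hε1, hε0,
      ← ENNReal.ofReal_add hp0.le (by linarith)]
    norm_num
  have hae : ∀ᵐ ω ∂ℙ, ε ω = 0 ∨ ε ω = 1 := by
    have hc : ℙ (A ∪ B)ᶜ = 0 := by
      rw [measure_compl (hA.union hB) (measure_ne_top _ _), hunion,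
        measure_univ, tsub_self]
    refine measure_mono_null ?_ hc
    intro ω hω
    simp only [Set.mem_compl_iff, Set.mem_union, hAdef, hBdef,
      Set.mem_setOf_eq, Set.mem_setOf_eq] at *
    tauto
  -- Step A: E[log X] = E[log (1/X + ε)]
  have hm2 : Measurable (fun ω => 1 / X ω + ε ω) :=
    (measurable_const.div hXm).add hεm
  have hstepA : ∫ ω, Real.log (X ω) ∂ℙ
      = ∫ ω, Real.log (1 / X ω + ε ω) ∂ℙ := by
    rw [← integral_map hXm.aemeasurable
        Real.measurable_log.aestronglyMeasurable, hdist,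
      integral_map hm2.aemeasurable Real.measurable_log.aestronglyMeasurable]
  -- pointwise identity
  have hpt : ∀ᵐ ω ∂ℙ, Real.log (1 / X ω + ε ω)
      = -Real.log (X ω) + ε ω * Real.log (1 + X ω) := by
    filter_upwards [hXpos, hae] with ω hx hε
    rcases hε with h0 | h1
    · simp [h0, one_div, Real.log_inv]
    · have hx0 : X ω ≠ 0 := ne_of_gt hx
      have h1x : (0:ℝ) < 1 + X ω := by linarith
      have : 1 / X ω + ε ω = (1 + X ω) / X ω := by
        rw [h1]; field_simp
      rw [this, Real.log_div (ne_of_gt h1x) hx0, h1]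
      ring
  -- ε * log(1+X) is a.e. an indicator
  have hind : (fun ω => ε ω * Real.log (1 + X ω))
      =ᵐ[ℙ] A.indicator (fun ω => Real.log (1 + X ω)) := by
    filter_upwards [hae] with ω hε
    by_cases hω : ω ∈ A
    · have : ε ω = 1 := hω
      simp [Set.indicator_of_mem hω, this]
    · have h0 : ε ω = 0 := by
        rcases hε with h | h
        · exact h
        · exact absurd h hω
      simp [Set.indicator_of_notMem hω, h0]
  have hεind : ε =ᵐ[ℙ] A.indicator (fun _ => (1:ℝ)) := by
    filter_upwards [hae] with ω hε
    by_cases hω : ω ∈ A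
    · have : ε ω = 1 := hω
      simp [Set.indicator_of_mem hω, this]
    · have h0 : ε ω = 0 := by
        rcases hε with h | h
        · exact h
        · exact absurd h hω
      simp [Set.indicator_of_notMem hω, h0]
  have hIntE : Integrable (fun ω => ε ω * Real.log (1 + X ω)) ℙ :=
    (hint2.indicator hA).congr hind.symm
  have hIntε : Integrable ε ℙ :=
    ((integrable_const (1:ℝ)).indicator hA).congr hεind.symm
  have hEε : ∫ ω, ε ω ∂ℙ = p := by
    rw [integral_congr_ae hεind, integral_indicator_const (1:ℝ) hA, measureReal_def, hε1,
      smul_eq_mul, mul_one, ENNReal.toReal_ofReal hp0.le]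
  -- independence
  have hi : IndepFun (fun ω => Real.log (1 + X ω)) ε ℙ :=
    hindep.comp (Real.measurable_log.comp (measurable_id.const_add 1))
      measurable_id
  have hmul : ∫ ω, ε ω * Real.log (1 + X ω) ∂ℙ
      = p * ∫ ω, Real.log (1 + X ω) ∂ℙ := by
    have := hi.symm.integral_mul_eq_mul_integral hεm.aestronglyMeasurable
      ((Real.measurable_log.comp (measurable_id.const_add 1)).comp
        hXm).aestronglyMeasurable
    simpa [hEε] using this
  -- combine
  have hneg : Integrable (fun ω => -Real.log (X ω)) ℙ := hint1.neg
  have hsum : ∫ ω, (-Real.log (X ω) + ε ω * Real.log (1 + X ω)) ∂ℙ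
      = -∫ ω, Real.log (X ω) ∂ℙ + p * ∫ ω, Real.log (1 + X ω) ∂ℙ := by
    rw [integral_add hneg hIntE, hmul, integral_neg]
  have hkey : ∫ ω, Real.log (X ω) ∂ℙ
      = -∫ ω, Real.log (X ω) ∂ℙ + p * ∫ ω, Real.log (1 + X ω) ∂ℙ :=
    hstepA.trans ((integral_congr_ae hpt).trans hsum)
  linarith
end

section
/- Let 0 < p < 1 and let X be a positive random variable with atomless law satisfying the distributional identity X ~ 1/X + ε with ε ~ Bernoulli(p) independent of X. Then E[log(X)·1_{X<1}] = (p − 1)·E[log(X)·1_{X>1}]. -/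
open MeasureTheory ProbabilityTheory Real

/-- For the Bernoulli(p) invariant distribution `X ~ 1/X + ε`:
`E[log(X)·1_{X<1}] = (p − 1)·E[log(X)·1_{X>1}]`. -/
theorem bernoulli_p_indicator_identity_lt
    {Ω : Type*} [MeasureSpace Ω] [IsProbabilityMeasure (ℙ : Measure Ω)]
    (p : ℝ) (hp0 : 0 < p) (hp1 : p < 1)
    (X ε : Ω → ℝ) (hXm : Measurable X) (hεm : Measurable ε)
    (hXpos : ∀ᵐ ω ∂ℙ, 0 < X ω)
    (hatomless : ∀ c : ℝ, ℙ {ω | X ω = c} = 0)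
    (hε1 : ℙ {ω | ε ω = 1} = ENNReal.ofReal p)
    (hε0 : ℙ {ω | ε ω = 0} = ENNReal.ofReal (1 - p))
    (hindep : IndepFun X ε ℙ)
    (hdist : Measure.map X ℙ = Measure.map (fun ω => 1 / X ω + ε ω) ℙ)
    (hint : Integrable (fun ω => Real.log (X ω)) ℙ) :
    ∫ ω in {ω | X ω < 1}, Real.log (X ω) ∂ℙ =
      (p - 1) * ∫ ω in {ω | 1 < X ω}, Real.log (X ω) ∂ℙ := by
  classical
  set g : ℝ → ℝ := (Set.Iio (1:ℝ)).indicator Real.log with hg_def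
  set h : ℝ → ℝ := (Set.Ioi (1:ℝ)).indicator (fun x => -Real.log x) with hh_def
  set φ : ℝ → ℝ := ({(0:ℝ)} : Set ℝ).indicator (fun _ => (1:ℝ)) with hφ_def
  have hgm : Measurable g := Real.measurable_log.indicator measurableSet_Iio
  have hhm : Measurable h := Real.measurable_log.neg.indicator measurableSet_Ioi
  have hφm : Measurable φ := measurable_const.indicator (measurableSet_singleton 0)
  have hYm : Measurable (fun ω => 1 / X ω + ε ω) :=
    (measurable_const.div hXm).add hεm
  -- Step 1: left side as E[g ∘ X]
  have h1 : ∫ ω in {ω | X ω < 1}, Real.log (X ω) ∂ℙ = ∫ ω, g (X ω) ∂ℙ := by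
    have hset : {ω | X ω < 1} = X ⁻¹' Set.Iio 1 := rfl
    rw [hset, ← integral_indicator (hXm measurableSet_Iio)]
    congr 1
  -- Step 2: E[g ∘ X] = E[g ∘ Y] by equidistribution
  have h2 : ∫ ω, g (X ω) ∂ℙ = ∫ ω, g (1 / X ω + ε ω) ∂ℙ := by
    rw [← integral_map hXm.aemeasurable hgm.aestronglyMeasurable, hdist,
      integral_map hYm.aemeasurable hgm.aestronglyMeasurable]
  -- ε ∈ {0,1} a.e.
  have hA : MeasurableSet {ω | ε ω = 0} := hεm (measurableSet_singleton 0)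
  have hB : MeasurableSet {ω | ε ω = 1} := hεm (measurableSet_singleton 1)
  have hε01 : ∀ᵐ ω ∂ℙ, ε ω = 0 ∨ ε ω = 1 := by
    have hdisj : Disjoint {ω | ε ω = 0} {ω | ε ω = 1} := by
      rw [Set.disjoint_left]
      intro ω h0 h1
      simp only [Set.mem_setOf_eq] at h0 h1
      rw [h0] at h1; norm_num at h1
    have hunion : ℙ ({ω | ε ω = 0} ∪ {ω | ε ω = 1}) = 1 := by
      rw [measure_union hdisj hB, hε0, hε1,
        ← ENNReal.ofReal_add (by linarith) (by linarith)]
      norm_num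
    rw [ae_iff]
    have hset : {ω | ¬(ε ω = 0 ∨ ε ω = 1)} = ({ω | ε ω = 0} ∪ {ω | ε ω = 1})ᶜ := by
      ext ω; simp [not_or]
    rw [hset, measure_compl (hA.union hB) (measure_ne_top _ _), hunion, measure_univ]
    simp
  -- Step 3: g ∘ Y = (h ∘ X) * (φ ∘ ε) a.e.
  have h3 : (fun ω => g (1 / X ω + ε ω)) =ᵐ[ℙ] fun ω => h (X ω) * φ (ε ω) := by
    filter_upwards [hXpos, hε01] with ω hx hε
    rcases hε with he | he
    · rw [he]
      have hφ0 : φ (0:ℝ) = 1 := by simp [hφ_def]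
      rw [hφ0, mul_one, add_zero]
      rcases lt_trichotomy (X ω) 1 with hlt | heq | hgt
      · have h1x : ¬ (1 / X ω < 1) := by
          have : 1 < 1 / X ω := (one_lt_div hx).mpr hlt
          linarith
        rw [hg_def, hh_def, Set.indicator_of_notMem (by simpa using h1x),
          Set.indicator_of_notMem (by simp; linarith)]
      · rw [heq]
        rw [hg_def, hh_def, Set.indicator_of_notMem (by norm_num),
          Set.indicator_of_notMem (by norm_num)]
      · have h1x : 1 / X ω < 1 := by
          rw [div_lt_one hx]; exact hgt
        rw [hg_def, hh_def, Set.indicator_of_mem (Set.mem_Iio.mpr h1x),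
          Set.indicator_of_mem (Set.mem_Ioi.mpr hgt), one_div, Real.log_inv]
    · rw [he]
      have hgt1 : ¬ (1 / X ω + 1 < 1) := by
        have : 0 < 1 / X ω := by positivity
        linarith
      have hφ1 : φ (1:ℝ) = 0 := by norm_num [hφ_def]
      rw [hg_def, Set.indicator_of_notMem (by simpa using hgt1), hφ1, mul_zero]
  -- Step 4: independence factorization
  have hcomp : IndepFun (h ∘ X) (φ ∘ ε) ℙ := hindep.comp hhm hφm
  have h4 : ∫ ω, h (X ω) * φ (ε ω) ∂ℙ = (∫ ω, h (X ω) ∂ℙ) * ∫ ω, φ (ε ω) ∂ℙ :=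
    hcomp.integral_mul_eq_mul_integral (hhm.comp hXm).aestronglyMeasurable
      (hφm.comp hεm).aestronglyMeasurable
  -- Step 5: E[φ ∘ ε] = 1 - p
  have h5 : ∫ ω, φ (ε ω) ∂ℙ = 1 - p := by
    have hfun : (fun ω => φ (ε ω)) = (ε ⁻¹' {0}).indicator (fun _ => (1:ℝ)) := by
      ext ω
      by_cases hω : ε ω = 0
      · simp [hφ_def, hω]
      · simp [hφ_def, Set.indicator_apply, hω]
    rw [hfun, integral_indicator_const _ (hεm (measurableSet_singleton 0))]
    have hset : ε ⁻¹' {0} = {ω | ε ω = 0} := rfl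
    rw [hset, measureReal_def, hε0, smul_eq_mul, mul_one, ENNReal.toReal_ofReal (by linarith)]
  -- Step 6: E[h ∘ X] = - right integral
  have h6 : ∫ ω, h (X ω) ∂ℙ = - ∫ ω in {ω | 1 < X ω}, Real.log (X ω) ∂ℙ := by
    have hset : {ω | 1 < X ω} = X ⁻¹' Set.Ioi 1 := rfl
    rw [hset, ← integral_indicator (hXm measurableSet_Ioi), ← integral_neg]
    congr 1
    ext ω
    simp only [hh_def, Set.indicator_apply, Set.mem_preimage]
    split <;> simp
  rw [h1, h2, integral_congr_ae h3, h4, h5, h6]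
  ring
end

section
/- Let 0 < p < 1 and let X be a positive random variable with atomless law satisfying the distributional identity X ~ 1/X + ε with ε ~ Bernoulli(p) independent of X. Then E[log(X)·1_{X>1}] = (1/p)·E[log X]. -/
open MeasureTheory ProbabilityTheory Real

/-- For the Bernoulli(p) invariant distribution `X ~ 1/X + ε`:
`E[log(X)·1_{X>1}] = (1/p)·E[log X]`. -/
theorem bernoulli_p_indicator_identity_gt
    {Ω : Type*} [MeasureSpace Ω] [IsProbabilityMeasure (ℙ : Measure Ω)]
    (p : ℝ) (hp0 : 0 < p) (hp1 : p < 1)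
    (X ε : Ω → ℝ) (hXm : Measurable X) (hεm : Measurable ε)
    (hXpos : ∀ᵐ ω ∂ℙ, 0 < X ω)
    (hatomless : ∀ c : ℝ, ℙ {ω | X ω = c} = 0)
    (hε1 : ℙ {ω | ε ω = 1} = ENNReal.ofReal p)
    (hε0 : ℙ {ω | ε ω = 0} = ENNReal.ofReal (1 - p))
    (hindep : IndepFun X ε ℙ)
    (hdist : Measure.map X ℙ = Measure.map (fun ω => 1 / X ω + ε ω) ℙ)
    (hint : Integrable (fun ω => Real.log (X ω)) ℙ) :
    ∫ ω in {ω | 1 < X ω}, Real.log (X ω) ∂ℙ =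
      (1 / p) * ∫ ω, Real.log (X ω) ∂ℙ := by
  set Y : Ω → ℝ := fun ω => 1 / X ω + ε ω with hYdef
  have hYm : Measurable Y := (measurable_const.div hXm).add hεm
  set f : ℝ → ℝ := fun x => Set.indicator (Set.Ioi 1) Real.log x with hfdef
  have hfm : Measurable f := Real.measurable_log.indicator measurableSet_Ioi
  -- transfer of integrals
  have eq1 : ∫ ω, Real.log (X ω) ∂ℙ = ∫ ω, Real.log (Y ω) ∂ℙ := by
    have h1 : ∫ x, Real.log x ∂(Measure.map X ℙ) = ∫ ω, Real.log (X ω) ∂ℙ :=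
      integral_map hXm.aemeasurable Real.measurable_log.aestronglyMeasurable
    have h2 : ∫ x, Real.log x ∂(Measure.map Y ℙ) = ∫ ω, Real.log (Y ω) ∂ℙ :=
      integral_map hYm.aemeasurable Real.measurable_log.aestronglyMeasurable
    rw [← h1, hdist, h2]
  have eq2 : ∫ ω, f (X ω) ∂ℙ = ∫ ω, f (Y ω) ∂ℙ := by
    have h1 : ∫ x, f x ∂(Measure.map X ℙ) = ∫ ω, f (X ω) ∂ℙ :=
      integral_map hXm.aemeasurable hfm.aestronglyMeasurable
    have h2 : ∫ x, f x ∂(Measure.map Y ℙ) = ∫ ω, f (Y ω) ∂ℙ :=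
      integral_map hYm.aemeasurable hfm.aestronglyMeasurable
    rw [← h1, hdist, h2]
  -- integrability
  have iY : Integrable (fun ω => Real.log (Y ω)) ℙ := by
    have h1 : Integrable Real.log (Measure.map X ℙ) :=
      (integrable_map_measure Real.measurable_log.aestronglyMeasurable hXm.aemeasurable).mpr hint
    rw [hdist] at h1
    exact (integrable_map_measure Real.measurable_log.aestronglyMeasurable hYm.aemeasurable).mp h1
  have ifY : Integrable (fun ω => f (Y ω)) ℙ := by
    refine iY.mono (hfm.comp hYm).aestronglyMeasurable ?_
    filter_upwards with ω
    simp only [hfdef, Set.indicator_apply, Real.norm_eq_abs]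
    split_ifs <;> simp [abs_nonneg]
  -- F and G
  set F : ℝ → ℝ := fun x => Set.indicator (Set.Ici 1) (fun x => -Real.log x) x with hFdef
  set G : ℝ → ℝ := fun e => Set.indicator ({0} : Set ℝ) (fun _ => (1:ℝ)) e with hGdef
  have hFm : Measurable F := Real.measurable_log.neg.indicator measurableSet_Ici
  have hGm : Measurable G := measurable_const.indicator (measurableSet_singleton 0)
  -- a.e. ε ∈ {0,1}
  have hAmeas : MeasurableSet {ω | ε ω = 1} := hεm (measurableSet_singleton 1)
  have hBmeas : MeasurableSet {ω | ε ω = 0} := hεm (measurableSet_singleton 0)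
  have hae01 : ∀ᵐ ω ∂ℙ, ε ω = 0 ∨ ε ω = 1 := by
    have hdisj : Disjoint {ω | ε ω = 1} {ω | ε ω = 0} := by
      rw [Set.disjoint_left]
      intro ω h1 h0
      simp only [Set.mem_setOf_eq] at h1 h0
      rw [h1] at h0; norm_num at h0
    have hunion : ℙ ({ω | ε ω = 1} ∪ {ω | ε ω = 0}) = 1 := by
      rw [measure_union hdisj hBmeas, hε1, hε0,
        ← ENNReal.ofReal_add (le_of_lt hp0) (by linarith)]
      norm_num
    have hcompl : ℙ ({ω | ε ω = 1} ∪ {ω | ε ω = 0})ᶜ = 0 := by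
      rw [measure_compl (hAmeas.union hBmeas) (measure_ne_top _ _), hunion, measure_univ]
      simp
    rw [ae_iff]
    refine measure_mono_null ?_ hcompl
    intro ω hω
    simp only [Set.mem_setOf_eq] at hω
    push_neg at hω
    simp only [Set.mem_compl_iff, Set.mem_union, Set.mem_setOf_eq]
    push_neg
    exact ⟨hω.2, hω.1⟩
  -- key a.e. identity
  have key : (fun ω => Real.log (Y ω) - f (Y ω)) =ᵐ[ℙ] fun ω => F (X ω) * G (ε ω) := by
    filter_upwards [hXpos, hae01] with ω hX0 hε01
    have hXinv : 0 < 1 / X ω := by positivity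
    rcases hε01 with h0 | h1
    · have hYω : Y ω = 1 / X ω := by simp [hYdef, h0]
      by_cases hx : 1 ≤ X ω
      · have h1x : Y ω ≤ 1 := by rw [hYω, div_le_one hX0]; linarith
        have hfY : f (Y ω) = 0 := by
          rw [hfdef]
          exact Set.indicator_of_notMem (by simpa using not_lt.mpr h1x) _
        have hFX : F (X ω) = -Real.log (X ω) := by
          rw [hFdef]; exact Set.indicator_of_mem hx _
        have hG0 : G (ε ω) = 1 := by rw [hGdef, h0]; simp
        rw [hfY, hFX, hG0, hYω]
        rw [one_div, Real.log_inv]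
        ring
      · have h1x : 1 < Y ω := by rw [hYω, lt_div_iff₀ hX0]; linarith
        have hfY : f (Y ω) = Real.log (Y ω) := by
          rw [hfdef]; exact Set.indicator_of_mem h1x _
        have hFX : F (X ω) = 0 := by
          rw [hFdef]; exact Set.indicator_of_notMem (by simpa using hx) _
        rw [hfY, hFX]; ring
    · have h1x : 1 < Y ω := by
        have : Y ω = 1 / X ω + 1 := by simp [hYdef, h1]
        rw [this]; linarith
      have hfY : f (Y ω) = Real.log (Y ω) := by
        rw [hfdef]; exact Set.indicator_of_mem h1x _
      have hG1 : G (ε ω) = 0 := by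
        rw [hGdef, h1]
        exact Set.indicator_of_notMem (by norm_num) _
      rw [hfY, hG1]; ring
  -- integral of G ∘ ε
  have intG : ∫ ω, G (ε ω) ∂ℙ = 1 - p := by
    have h1 : (fun ω => G (ε ω)) = Set.indicator {ω | ε ω = 0} (fun _ => (1:ℝ)) := by
      ext ω
      by_cases h : ε ω = 0
      · rw [hGdef]
        simp [Set.indicator_of_mem, h]
      · simp [hGdef, Set.indicator_apply, h]
    rw [h1, integral_indicator hBmeas]
    simp [measureReal_def, hε0, ENNReal.toReal_ofReal (by linarith : (0:ℝ) ≤ 1 - p)]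
  -- integral of F ∘ X
  have hsetae : {ω | 1 ≤ X ω} =ᵐ[ℙ] {ω | 1 < X ω} := by
    rw [Filter.eventuallyEq_set]
    have h1 : ℙ {ω | X ω = 1} = 0 := hatomless 1
    rw [ae_iff]
    refine measure_mono_null ?_ h1
    intro ω hω
    simp only [Set.mem_setOf_eq] at hω ⊢
    by_contra hne
    rcases lt_or_ge (X ω) 1 with h | h
    · exact hω (by constructor <;> intro <;> [linarith; linarith])
    · rcases eq_or_lt_of_le h with he | hl
      · exact hne he.symm
      · exact hω (by constructor <;> intro <;> [exact hl; exact h])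
  have intF : ∫ ω, F (X ω) ∂ℙ = -∫ ω in {ω | 1 < X ω}, Real.log (X ω) ∂ℙ := by
    have hIci : MeasurableSet {ω | 1 ≤ X ω} := hXm measurableSet_Ici
    have h1 : (fun ω => F (X ω)) = Set.indicator {ω | 1 ≤ X ω} (fun ω => -Real.log (X ω)) := by
      ext ω
      by_cases h : 1 ≤ X ω <;> simp [hFdef, Set.indicator_apply, h]
    rw [h1]
    rw [show integral ℙ ({ω | 1 ≤ X ω}.indicator fun ω => -Real.log (X ω)) =
        ∫ ω in {ω | 1 ≤ X ω}, -Real.log (X ω) ∂ℙ from integral_indicator hIci,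
      integral_neg, neg_inj]
    exact setIntegral_congr_set hsetae
  -- goal-side identification
  have hfX : ∫ ω, f (X ω) ∂ℙ = ∫ ω in {ω | 1 < X ω}, Real.log (X ω) ∂ℙ := by
    have h1 : (fun ω => f (X ω)) = Set.indicator {ω | 1 < X ω} (fun ω => Real.log (X ω)) := by
      ext ω
      by_cases h : 1 < X ω <;> simp [hfdef, Set.indicator_apply, h]
    rw [h1]
    exact integral_indicator (hXm measurableSet_Ioi)
  -- independence
  have hmul : ∫ ω, F (X ω) * G (ε ω) ∂ℙ = (∫ ω, F (X ω) ∂ℙ) * ∫ ω, G (ε ω) ∂ℙ := by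
    have hFG : IndepFun (fun ω => F (X ω)) (fun ω => G (ε ω)) ℙ := hindep.comp hFm hGm
    exact hFG.integral_mul_eq_mul_integral (hFm.comp hXm).aestronglyMeasurable (hGm.comp hεm).aestronglyMeasurable
  -- put it together
  set L := ∫ ω, Real.log (X ω) ∂ℙ with hL
  set A := ∫ ω in {ω | 1 < X ω}, Real.log (X ω) ∂ℙ with hA
  have main : L - A = (-A) * (1 - p) := by
    calc L - A = ∫ ω, Real.log (Y ω) ∂ℙ - ∫ ω, f (Y ω) ∂ℙ := by
          rw [eq1, ← eq2, hfX]
      _ = ∫ ω, (Real.log (Y ω) - f (Y ω)) ∂ℙ := (integral_sub iY ifY).symm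
      _ = ∫ ω, F (X ω) * G (ε ω) ∂ℙ := integral_congr_ae key
      _ = (∫ ω, F (X ω) ∂ℙ) * ∫ ω, G (ε ω) ∂ℙ := hmul
      _ = (-A) * (1 - p) := by rw [intF, intG]
  have hpA : L = p * A := by nlinarith [main]
  rw [hpA]
  field_simp
end

section
/- Let 0 < p < 1 and let X be a positive random variable with atomless law satisfying the distributional identity X ~ 1/X + ε with ε ~ Bernoulli(p) independent of X. Then E[log(X)·1_{X<1}] = ((p − 1)/p)·E[log X]. -/
open MeasureTheory ProbabilityTheory Real

/-- For the Bernoulli(p) invariant distribution `X ~ 1/X + ε`: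
`E[log(X)·1_{X<1}] = ((p − 1)/p)·E[log X]`. -/
theorem bernoulli_p_indicator_identity_lt_full
    {Ω : Type*} [MeasureSpace Ω] [IsProbabilityMeasure (ℙ : Measure Ω)]
    (p : ℝ) (hp0 : 0 < p) (hp1 : p < 1)
    (X ε : Ω → ℝ) (hXm : Measurable X) (hεm : Measurable ε)
    (hXpos : ∀ᵐ ω ∂ℙ, 0 < X ω)
    (hatomless : ∀ c : ℝ, ℙ {ω | X ω = c} = 0)
    (hε1 : ℙ {ω | ε ω = 1} = ENNReal.ofReal p)
    (hε0 : ℙ {ω | ε ω = 0} = ENNReal.ofReal (1 - p))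
    (hindep : IndepFun X ε ℙ)
    (hdist : Measure.map X ℙ = Measure.map (fun ω => 1 / X ω + ε ω) ℙ)
    (hint : Integrable (fun ω => Real.log (X ω)) ℙ) :
    ∫ ω in {ω | X ω < 1}, Real.log (X ω) ∂ℙ =
      ((p - 1) / p) * ∫ ω, Real.log (X ω) ∂ℙ := by
  set Y : Ω → ℝ := fun ω => 1 / X ω + ε ω with hYdef
  have hYm : Measurable Y := ((hXm.const_div 1)).add hεm
  set f : ℝ → ℝ := (Set.Iio (1:ℝ)).indicator Real.log with hfdef
  have hfm : Measurable f := Real.measurable_log.indicator measurableSet_Iio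
  set g : ℝ → ℝ := (Set.Ioi (1:ℝ)).indicator (fun x => -Real.log x) with hgdef
  have hgm : Measurable g := Real.measurable_log.neg.indicator measurableSet_Ioi
  set h : ℝ → ℝ := ({(0:ℝ)} : Set ℝ).indicator (fun _ => (1:ℝ)) with hhdef
  have hhm : Measurable h := measurable_const.indicator (measurableSet_singleton 0)
  -- a.e. ε ∈ {0,1}
  have hε01 : ∀ᵐ ω ∂ℙ, ε ω = 0 ∨ ε ω = 1 := by
    have hS0 : MeasurableSet {ω | ε ω = 0} := hεm (measurableSet_singleton 0)
    have hS1 : MeasurableSet {ω | ε ω = 1} := hεm (measurableSet_singleton 1)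
    have hd : Disjoint {ω | ε ω = 0} {ω | ε ω = 1} := by
      rw [Set.disjoint_left]
      rintro ω h0 h1
      simp only [Set.mem_setOf_eq] at h0 h1
      rw [h0] at h1; norm_num at h1
    have hu : ℙ ({ω | ε ω = 0} ∪ {ω | ε ω = 1}) = 1 := by
      rw [measure_union hd hS1, hε0, hε1,
        ← ENNReal.ofReal_add (by linarith) hp0.le]
      norm_num
    have hc : ℙ ({ω | ε ω = 0} ∪ {ω | ε ω = 1})ᶜ = 0 := by
      rw [measure_compl (hS0.union hS1) (measure_ne_top _ _), hu, measure_univ,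
        tsub_self]
    rw [ae_iff]
    have : {ω | ¬(ε ω = 0 ∨ ε ω = 1)} = ({ω | ε ω = 0} ∪ {ω | ε ω = 1})ᶜ := by
      ext ω; simp [not_or]
    rw [this, hc]
  -- integrability helpers
  have hfX_int : Integrable (fun ω => f (X ω)) ℙ := by
    refine hint.mono (hfm.comp hXm).aestronglyMeasurable ?_
    filter_upwards with ω
    simp only [hfdef, Set.indicator]
    split_ifs <;> simp [norm_eq_abs, abs_nonneg]
  have hgX_int : Integrable (fun ω => g (X ω)) ℙ := by
    refine hint.mono (hgm.comp hXm).aestronglyMeasurable ?_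
    filter_upwards with ω
    simp only [hgdef, Set.indicator]
    split_ifs <;> simp [norm_eq_abs, abs_nonneg]
  have hhε_int : Integrable (fun ω => h (ε ω)) ℙ := by
    refine (integrable_const (1:ℝ)).mono (hhm.comp hεm).aestronglyMeasurable ?_
    filter_upwards with ω
    simp only [hhdef, Set.indicator]
    split_ifs <;> simp
  -- transfer through the distributional identity
  have htrans : ∫ ω, f (X ω) ∂ℙ = ∫ ω, f (Y ω) ∂ℙ := by
    rw [← integral_map hXm.aemeasurable hfm.aestronglyMeasurable, hdist,
      integral_map hYm.aemeasurable]
    rw [← hdist]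
    exact hfm.aestronglyMeasurable
  -- pointwise identity f(Y) = g(X) * h(ε) a.e.
  have hkey : ∀ᵐ ω ∂ℙ, f (Y ω) = g (X ω) * h (ε ω) := by
    filter_upwards [hXpos, hε01] with ω hx hε
    have hxinv : 0 < 1 / X ω := by positivity
    rcases hε with h0 | h1
    · have hYω : Y ω = 1 / X ω := by show 1 / X ω + ε ω = 1 / X ω; rw [h0, add_zero]
      have hh0 : h (ε ω) = 1 := by
        rw [h0]; exact Set.indicator_of_mem (by simp) _
      rw [hYω, hh0, mul_one]
      by_cases hgt : 1 < X ω
      · have hlt : 1 / X ω ∈ Set.Iio (1:ℝ) := Set.mem_Iio.mpr ((div_lt_one hx).mpr hgt)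
        have hf1 : f (1 / X ω) = Real.log (1 / X ω) := Set.indicator_of_mem hlt _
        have hg1 : g (X ω) = -Real.log (X ω) := Set.indicator_of_mem hgt _
        rw [hf1, hg1, one_div, Real.log_inv]
      · have hge : 1 / X ω ∉ Set.Iio (1:ℝ) := fun hc => hgt ((div_lt_one hx).mp hc)
        have hf1 : f (1 / X ω) = 0 := Set.indicator_of_notMem hge _
        have hg1 : g (X ω) = 0 := Set.indicator_of_notMem hgt _
        rw [hf1, hg1]
    · have hno : Y ω ∉ Set.Iio (1:ℝ) := by
        show ¬ (1 / X ω + ε ω < 1)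
        rw [h1]; push_neg; linarith
      have hf1 : f (Y ω) = 0 := Set.indicator_of_notMem hno _
      have hh1 : h (ε ω) = 0 := by
        rw [h1]; exact Set.indicator_of_notMem (by norm_num) _
      rw [hf1, hh1, mul_zero]
  have hfY : ∫ ω, f (Y ω) ∂ℙ = (∫ ω, g (X ω) ∂ℙ) * ∫ ω, h (ε ω) ∂ℙ := by
    rw [integral_congr_ae hkey]
    exact (hindep.comp hgm hhm).integral_mul_eq_mul_integral
      (hgm.comp hXm).aestronglyMeasurable (hhm.comp hεm).aestronglyMeasurable
  -- compute ∫ h(ε)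
  have hhval : ∫ ω, h (ε ω) ∂ℙ = 1 - p := by
    have : (fun ω => h (ε ω)) = fun ω => ({ω | ε ω = 0} : Set Ω).indicator (fun _ => (1:ℝ)) ω := by
      ext ω
      simp only [hhdef, Set.indicator]
      by_cases h0 : ε ω = 0 <;> simp [h0]
    have hS0 : MeasurableSet ({ω | ε ω = 0} : Set Ω) := hεm (measurableSet_singleton 0)
    rw [this, integral_indicator_const (1:ℝ) hS0, measureReal_def, hε0,
      ENNReal.toReal_ofReal (by linarith), smul_eq_mul, mul_one]
  -- express set integrals via indicators
  have hA : ∫ ω in {ω | X ω < 1}, Real.log (X ω) ∂ℙ = ∫ ω, f (X ω) ∂ℙ := by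
    have hSlt : MeasurableSet ({ω | X ω < 1} : Set Ω) := hXm measurableSet_Iio
    rw [← integral_indicator hSlt]
    refine integral_congr_ae (Filter.Eventually.of_forall fun ω => ?_)
    simp only [hfdef, Set.indicator_apply, Set.mem_setOf_eq, Set.mem_Iio]
  have hC : ∫ ω, g (X ω) ∂ℙ = - ∫ ω in {ω | 1 < X ω}, Real.log (X ω) ∂ℙ := by
    have : (fun ω => g (X ω)) = fun ω => ({ω | 1 < X ω} : Set Ω).indicator (fun ω => -Real.log (X ω)) ω := by
      ext ω
      exact (Set.indicator_comp_right (s := Set.Ioi 1) X (g := fun x => -Real.log x) (x := ω)).symm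
    have hSgt : MeasurableSet ({ω | 1 < X ω} : Set Ω) := hXm measurableSet_Ioi
    rw [this, integral_indicator hSgt, integral_neg]
  -- A + C = I
  set A := ∫ ω in {ω | X ω < 1}, Real.log (X ω) ∂ℙ with hAdef
  set C := ∫ ω in {ω | 1 < X ω}, Real.log (X ω) ∂ℙ with hCdef
  set I := ∫ ω, Real.log (X ω) ∂ℙ with hIdef
  have hACI : A + C = I := by
    have hcompl : ({ω | X ω < 1} : Set Ω)ᶜ =ᵐ[ℙ] ({ω | 1 < X ω} : Set Ω) := by
      have h1 : ℙ (({ω | X ω < 1} : Set Ω)ᶜ \ {ω | 1 < X ω}) = 0 := by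
        refine measure_mono_null ?_ (hatomless 1)
        rintro ω ⟨h1, h2⟩
        simp only [Set.mem_compl_iff, Set.mem_setOf_eq, not_lt] at h1 h2 ⊢
        linarith
      have h2 : ℙ (({ω | 1 < X ω} : Set Ω) \ ({ω | X ω < 1} : Set Ω)ᶜ) = 0 := by
        refine measure_mono_null ?_ (hatomless 1)
        rintro ω ⟨h1, h2⟩
        simp only [Set.mem_setOf_eq, Set.mem_compl_iff, not_not, not_lt] at h1 h2 ⊢
        linarith
      exact (MeasureTheory.ae_eq_set).mpr ⟨h1, h2⟩
    have hSlt : MeasurableSet ({ω | X ω < 1} : Set Ω) := hXm measurableSet_Iio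
    have := integral_add_compl hSlt hint
    have h3 := setIntegral_congr_set (μ := ℙ) (f := fun ω => Real.log (X ω)) hcompl
    convert this using 2
    exact h3.symm
  have hmain : A = (-C) * (1 - p) := by
    rw [hA, htrans, hfY, hhval, hC]
  -- final algebra
  have hI : p * A = (p - 1) * I := by nlinarith [hmain, hACI]
  rw [div_mul_eq_mul_div, eq_div_iff hp0.ne']
  linear_combination hI
end

section
/- Let X be a positive random variable satisfying the distributional identity X ~ 1/X + ε with ε ~ Bernoulli(1/2) independent of X, and let a, b be the coefficient-pair arrays of the multi-level recursion. Then for every n ≥ 0, E[log X] = (1/((n+6)·2^n))·E[log(∏_{k=1}^{2^n} (a(n,k)·X + b(n,k)))]. -/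
open MeasureTheory ProbabilityTheory Real Finset

section Aux

variable {Ω : Type*} [MeasureSpace Ω] [IsProbabilityMeasure (ℙ : Measure Ω)]
    (X ε : Ω → ℝ)

/-- Transfer lemma: for the invariant distribution, `E[g(X)] = ½E[g(1/X)] + ½E[g(1/X+1)]`. -/
lemma bh_transfer (hXm : Measurable X) (hεm : Measurable ε)
    (hε1 : ℙ {ω | ε ω = 1} = 1 / 2)
    (hε0 : ℙ {ω | ε ω = 0} = 1 / 2)
    (hindep : IndepFun X ε ℙ)
    (hdist : Measure.map X ℙ = Measure.map (fun ω => 1 / X ω + ε ω) ℙ)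
    (g : ℝ → ℝ) (hg : Measurable g)
    (h0 : Integrable (fun ω => g (1 / X ω)) ℙ)
    (h1 : Integrable (fun ω => g (1 / X ω + 1)) ℙ) :
    ∫ ω, g (X ω) ∂ℙ =
      (1/2) * ∫ ω, g (1 / X ω) ∂ℙ + (1/2) * ∫ ω, g (1 / X ω + 1) ∂ℙ := by
  have hYm : Measurable fun ω => 1 / X ω + ε ω := (measurable_const.div hXm).add hεm
  have h₁ : ∫ ω, g (X ω) ∂ℙ = ∫ ω, g (1 / X ω + ε ω) ∂ℙ := by
    rw [← integral_map hXm.aemeasurable hg.aestronglyMeasurable, hdist,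
      integral_map hYm.aemeasurable hg.aestronglyMeasurable]
  -- indicator functions of the events ε = 0 and ε = 1
  set G0 : Ω → ℝ := fun ω => if ε ω = 0 then (1:ℝ) else 0 with hG0def
  set G1 : Ω → ℝ := fun ω => if ε ω = 1 then (1:ℝ) else 0 with hG1def
  have hφ0 : Measurable fun y : ℝ => if y = 0 then (1:ℝ) else 0 :=
    measurable_const.ite (measurableSet_singleton 0 : MeasurableSet {y : ℝ | y = 0}) measurable_const
  have hφ1 : Measurable fun y : ℝ => if y = 1 then (1:ℝ) else 0 :=
    measurable_const.ite (measurableSet_singleton 1 : MeasurableSet {y : ℝ | y = 1}) measurable_const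
  have hG0m : Measurable G0 := hφ0.comp hεm
  have hG1m : Measurable G1 := hφ1.comp hεm
  have hF0m : Measurable fun ω => g (1 / X ω) := hg.comp (measurable_const.div hXm)
  have hF1m : Measurable fun ω => g (1 / X ω + 1) :=
    hg.comp ((measurable_const.div hXm).add measurable_const)
  -- almost everywhere, ε = 0 or ε = 1
  have hA0 : MeasurableSet {ω | ε ω = 0} := hεm (measurableSet_singleton 0)
  have hA1 : MeasurableSet {ω | ε ω = 1} := hεm (measurableSet_singleton 1)
  have hae : ∀ᵐ ω ∂ℙ, ε ω = 0 ∨ ε ω = 1 := by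
    have hdisj : Disjoint {ω | ε ω = 0} {ω | ε ω = 1} := by
      rw [Set.disjoint_left]
      intro ω h0' h1'
      simp only [Set.mem_setOf_eq] at h0' h1'
      exact zero_ne_one (h0'.symm.trans h1')
    have hunion : ℙ ({ω | ε ω = 0} ∪ {ω | ε ω = 1}) = 1 := by
      rw [measure_union hdisj hA1, hε0, hε1, ENNReal.div_add_div_same]
      have h2 : (1 + 1 : ENNReal) = 2 := by norm_num
      rw [h2]
      exact ENNReal.div_self (by norm_num) (by norm_num)
    have : ℙ ({ω | ε ω = 0} ∪ {ω | ε ω = 1})ᶜ = 0 := by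
      rw [measure_compl (hA0.union hA1) (measure_ne_top _ _), hunion, measure_univ]
      simp
    filter_upwards [(MeasureTheory.mem_ae_iff).2 this] with ω hω
    simpa using hω
  -- rewrite the integrand
  have heq : (fun ω => g (1 / X ω + ε ω)) =ᵐ[ℙ]
      fun ω => g (1 / X ω) * G0 ω + g (1 / X ω + 1) * G1 ω := by
    filter_upwards [hae] with ω hω
    rcases hω with h | h <;> simp [hG0def, hG1def, h]
  have hi0 : Integrable (fun ω => g (1 / X ω) * G0 ω) ℙ := by
    refine h0.mono (hF0m.mul hG0m).aestronglyMeasurable ?_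
    filter_upwards with ω
    simp only [norm_mul, Real.norm_eq_abs]
    by_cases h : ε ω = 0 <;> simp [hG0def, h, abs_nonneg]
  have hi1 : Integrable (fun ω => g (1 / X ω + 1) * G1 ω) ℙ := by
    refine h1.mono (hF1m.mul hG1m).aestronglyMeasurable ?_
    filter_upwards with ω
    simp only [norm_mul, Real.norm_eq_abs]
    by_cases h : ε ω = 1 <;> simp [hG1def, h, abs_nonneg]
  have hiG0 : Integrable G0 ℙ := by
    refine (integrable_const (1:ℝ)).mono hG0m.aestronglyMeasurable ?_
    filter_upwards with ω
    by_cases h : ε ω = 0 <;> simp [hG0def, h]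
  have hiG1 : Integrable G1 ℙ := by
    refine (integrable_const (1:ℝ)).mono hG1m.aestronglyMeasurable ?_
    filter_upwards with ω
    by_cases h : ε ω = 1 <;> simp [hG1def, h]
  -- independence
  have hind0 : IndepFun (fun ω => g (1 / X ω)) G0 ℙ :=
    hindep.comp (hg.comp (measurable_const.div measurable_id)) hφ0
  have hind1 : IndepFun (fun ω => g (1 / X ω + 1)) G1 ℙ :=
    hindep.comp (hg.comp ((measurable_const.div measurable_id).add measurable_const)) hφ1
  have hmul0 : ∫ ω, g (1 / X ω) * G0 ω ∂ℙ = (∫ ω, g (1 / X ω) ∂ℙ) * ∫ ω, G0 ω ∂ℙ :=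
    hind0.integral_fun_mul_eq_mul_integral h0.aestronglyMeasurable hiG0.aestronglyMeasurable
  have hmul1 : ∫ ω, g (1 / X ω + 1) * G1 ω ∂ℙ = (∫ ω, g (1 / X ω + 1) ∂ℙ) * ∫ ω, G1 ω ∂ℙ :=
    hind1.integral_fun_mul_eq_mul_integral h1.aestronglyMeasurable hiG1.aestronglyMeasurable
  -- the indicator integrals
  have hG0eq : G0 = Set.indicator {ω | ε ω = 0} (fun _ => (1:ℝ)) := by
    funext ω; by_cases h : ε ω = 0 <;> simp [hG0def, Set.indicator_apply, h]
  have hG1eq : G1 = Set.indicator {ω | ε ω = 1} (fun _ => (1:ℝ)) := by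
    funext ω; by_cases h : ε ω = 1 <;> simp [hG1def, Set.indicator_apply, h]
  have hIG0 : ∫ ω, G0 ω ∂ℙ = 1/2 := by
    rw [hG0eq, MeasureTheory.integral_indicator_const (1:ℝ) hA0, measureReal_def, hε0]
    simp [ENNReal.toReal_div]
  have hIG1 : ∫ ω, G1 ω ∂ℙ = 1/2 := by
    rw [hG1eq, MeasureTheory.integral_indicator_const (1:ℝ) hA1, measureReal_def, hε1]
    simp [ENNReal.toReal_div]
  rw [h₁, integral_congr_ae heq, integral_add hi0 hi1, hmul0, hmul1, hIG0, hIG1]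
  ring

/-- The one-step identity for affine logs. -/
lemma bh_step (hXm : Measurable X) (hεm : Measurable ε)
    (hXpos : ∀ᵐ ω ∂ℙ, 0 < X ω)
    (hε1 : ℙ {ω | ε ω = 1} = 1 / 2)
    (hε0 : ℙ {ω | ε ω = 0} = 1 / 2)
    (hindep : IndepFun X ε ℙ)
    (hdist : Measure.map X ℙ = Measure.map (fun ω => 1 / X ω + ε ω) ℙ)
    (hintX : Integrable (fun ω => Real.log (X ω)) ℙ)
    (A B : ℕ) (hA : 1 ≤ A)
    (hab : Integrable (fun ω => Real.log ((A:ℝ) * X ω + B)) ℙ)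
    (hba : Integrable (fun ω => Real.log ((B:ℝ) * X ω + A)) ℙ)
    (haba : Integrable (fun ω => Real.log (((A:ℝ) + B) * X ω + A)) ℙ) :
    (∫ ω, Real.log ((B:ℝ) * X ω + A) ∂ℙ) + ∫ ω, Real.log (((A:ℝ) + B) * X ω + A) ∂ℙ =
      2 * (∫ ω, Real.log ((A:ℝ) * X ω + B) ∂ℙ) + 2 * ∫ ω, Real.log (X ω) ∂ℙ := by
  have hA' : (1:ℝ) ≤ (A:ℝ) := by exact_mod_cast hA
  have hB' : (0:ℝ) ≤ (B:ℝ) := Nat.cast_nonneg B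
  set g : ℝ → ℝ := fun x => Real.log ((A:ℝ) * x + B) with hgdef
  have hg : Measurable g :=
    Real.measurable_log.comp ((measurable_const.mul measurable_id).add measurable_const)
  -- a.e. rewrites
  have he0 : (fun ω => g (1 / X ω)) =ᵐ[ℙ]
      fun ω => Real.log ((B:ℝ) * X ω + A) - Real.log (X ω) := by
    filter_upwards [hXpos] with ω hω
    have hx : X ω ≠ 0 := ne_of_gt hω
    have harg : (A:ℝ) * (1 / X ω) + B = ((B:ℝ) * X ω + A) / X ω := by
      field_simp; ring
    have hpos : (0:ℝ) < (B:ℝ) * X ω + A :=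
      lt_of_lt_of_le one_pos (le_add_of_nonneg_of_le (mul_nonneg hB' hω.le) hA')
    simp only [hgdef, harg]
    rw [Real.log_div (ne_of_gt hpos) hx]
  have he1 : (fun ω => g (1 / X ω + 1)) =ᵐ[ℙ]
      fun ω => Real.log (((A:ℝ) + B) * X ω + A) - Real.log (X ω) := by
    filter_upwards [hXpos] with ω hω
    have hx : X ω ≠ 0 := ne_of_gt hω
    have harg : (A:ℝ) * (1 / X ω + 1) + B = ((((A:ℝ) + B) * X ω + A)) / X ω := by
      field_simp; ring
    have hpos : (0:ℝ) < ((A:ℝ) + B) * X ω + A := by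
      have : (0:ℝ) < (A:ℝ) := lt_of_lt_of_le one_pos hA'
      have := mul_nonneg (add_nonneg this.le hB') hω.le
      linarith
    simp only [hgdef, harg]
    rw [Real.log_div (ne_of_gt hpos) hx]
  have h0 : Integrable (fun ω => g (1 / X ω)) ℙ :=
    (hba.sub hintX).congr he0.symm
  have h1 : Integrable (fun ω => g (1 / X ω + 1)) ℙ :=
    (haba.sub hintX).congr he1.symm
  have key := bh_transfer X ε hXm hεm hε1 hε0 hindep hdist g hg h0 h1
  rw [integral_congr_ae he0, integral_congr_ae he1] at key
  rw [integral_sub hba hintX, integral_sub haba hintX] at key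
  simp only [hgdef] at key
  linarith

end Aux

/-- For the Bernoulli(1/2) invariant distribution `X ~ 1/X + ε` and the
coefficient-pair arrays `a`, `b` of the multi-level recursion:
`E[log X] = (1/((n+6)·2^n))·E[log(∏_{k=1}^{2^n} (a(n,k)·X + b(n,k)))]` for all `n ≥ 0`. -/
theorem bernoulli_half_multilevel_identity
    {Ω : Type*} [MeasureSpace Ω] [IsProbabilityMeasure (ℙ : Measure Ω)]
    (X ε : Ω → ℝ) (hXm : Measurable X) (hεm : Measurable ε)
    (hXpos : ∀ᵐ ω ∂ℙ, 0 < X ω)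
    (hε1 : ℙ {ω | ε ω = 1} = 1 / 2)
    (hε0 : ℙ {ω | ε ω = 0} = 1 / 2)
    (hindep : IndepFun X ε ℙ)
    (hdist : Measure.map X ℙ = Measure.map (fun ω => 1 / X ω + ε ω) ℙ)
    (a b : ℕ → ℕ → ℕ)
    (ha0 : a 0 1 = 2) (hb0 : b 0 1 = 1)
    (hrec₁ : ∀ n k, 1 ≤ k → k ≤ 2 ^ n →
      a (n + 1) k = a n k + b n k ∧ b (n + 1) k = a n k)
    (hrec₂ : ∀ n k, 2 ^ n + 1 ≤ k → k ≤ 2 ^ (n + 1) →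
      a (n + 1) k = b n (k - 2 ^ n) ∧ b (n + 1) k = a n (k - 2 ^ n))
    (hintX : Integrable (fun ω => Real.log (X ω)) ℙ)
    (hintab : ∀ n k, 1 ≤ k → k ≤ 2 ^ n →
      Integrable (fun ω => Real.log ((a n k : ℝ) * X ω + (b n k : ℝ))) ℙ) :
    ∀ n : ℕ, ∫ ω, Real.log (X ω) ∂ℙ =
      (1 / (((n : ℝ) + 6) * 2 ^ n)) *
        ∫ ω, Real.log (∏ k ∈ Finset.Icc 1 (2 ^ n), ((a n k : ℝ) * X ω + (b n k : ℝ))) ∂ℙ := by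
  set m : ℝ := ∫ ω, Real.log (X ω) ∂ℙ with hm
  -- positivity of the arrays
  have hpos : ∀ n k, 1 ≤ k → k ≤ 2 ^ n → 1 ≤ a n k ∧ 1 ≤ b n k := by
    intro n
    induction n with
    | zero =>
      intro k h1 h2
      interval_cases k
      omega
    | succ n ih =>
      intro k h1 h2
      by_cases hk : k ≤ 2 ^ n
      · obtain ⟨ha, hb⟩ := hrec₁ n k h1 hk
        have := ih k h1 hk
        omega
      · push_neg at hk
        obtain ⟨ha, hb⟩ := hrec₂ n k (by omega) h2
        have hk1 : 1 ≤ k - 2 ^ n := by omega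
        have hk2 : k - 2 ^ n ≤ 2 ^ n := by
          have : 2 ^ (n + 1) = 2 ^ n + 2 ^ n := by ring
          omega
        have := ih (k - 2 ^ n) hk1 hk2
        omega
  -- notation: f n k = ∫ log(a n k * X + b n k)
  set f : ℕ → ℕ → ℝ := fun n k => ∫ ω, Real.log ((a n k : ℝ) * X ω + (b n k : ℝ)) ∂ℙ with hf
  -- log(X+1) is integrable
  have hint21 : Integrable (fun ω => Real.log (2 * X ω + 1)) ℙ := by
    have := hintab 0 1 le_rfl (by norm_num)
    rw [ha0, hb0] at this
    simpa using this
  have hint11 : Integrable (fun ω => Real.log (X ω + 1)) ℙ := by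
    refine hint21.mono
      (Real.measurable_log.comp (hXm.add measurable_const)).aestronglyMeasurable ?_
    filter_upwards [hXpos] with ω hω
    simp only [Real.norm_eq_abs]
    have h1 : 0 ≤ Real.log (X ω + 1) := Real.log_nonneg (by linarith)
    have h2 : Real.log (X ω + 1) ≤ Real.log (2 * X ω + 1) :=
      Real.log_le_log (by linarith) (by linarith)
    have h3 : 0 ≤ Real.log (2 * X ω + 1) := Real.log_nonneg (by linarith)
    rw [abs_of_nonneg h1, abs_of_nonneg h3]
    exact h2
  have hint01 : Integrable (fun ω => Real.log ((0:ℝ) * X ω + 1)) ℙ := by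
    simpa using (integrable_const (0:ℝ))
  -- the step lemma specialized
  have step := fun (A B : ℕ) (hA : 1 ≤ A) hab hba haba =>
    bh_step X ε hXm hεm hXpos hε1 hε0 hindep hdist hintX A B hA hab hba haba
  -- base computations: ∫ log(X+1) = 4m, ∫ log(2X+1) = 6m
  have hbase1 : ∫ ω, Real.log (X ω + 1) ∂ℙ = 4 * m := by
    have i1 : Integrable (fun ω => Real.log (((1:ℕ):ℝ) * X ω + ((0:ℕ):ℝ))) ℙ := by
      have he : (fun ω => Real.log (((1:ℕ):ℝ) * X ω + ((0:ℕ):ℝ)))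
          = fun ω => Real.log (X ω) := by funext ω; norm_num
      rw [he]; exact hintX
    have i2 : Integrable (fun ω => Real.log (((0:ℕ):ℝ) * X ω + ((1:ℕ):ℝ))) ℙ := by
      have he : (fun ω => Real.log (((0:ℕ):ℝ) * X ω + ((1:ℕ):ℝ)))
          = fun _ => (0:ℝ) := by funext ω; norm_num
      rw [he]; exact integrable_const 0
    have i3 : Integrable (fun ω => Real.log ((((1:ℕ):ℝ) + ((0:ℕ):ℝ)) * X ω + ((1:ℕ):ℝ))) ℙ := by
      have he : (fun ω => Real.log ((((1:ℕ):ℝ) + ((0:ℕ):ℝ)) * X ω + ((1:ℕ):ℝ)))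
          = fun ω => Real.log (X ω + 1) := by funext ω; norm_num
      rw [he]; exact hint11
    have h := step 1 0 le_rfl i1 i2 i3
    simp only [Nat.cast_one, Nat.cast_zero, zero_mul, zero_add, one_mul, add_zero,
      Real.log_one, integral_const, smul_eq_mul, mul_zero, measure_univ] at h
    linarith [h]
  have hbase2 : ∫ ω, Real.log (2 * X ω + 1) ∂ℙ = 6 * m := by
    have i1 : Integrable (fun ω => Real.log (((1:ℕ):ℝ) * X ω + ((1:ℕ):ℝ))) ℙ := by
      have he : (fun ω => Real.log (((1:ℕ):ℝ) * X ω + ((1:ℕ):ℝ)))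
          = fun ω => Real.log (X ω + 1) := by funext ω; norm_num
      rw [he]; exact hint11
    have i3 : Integrable (fun ω => Real.log ((((1:ℕ):ℝ) + ((1:ℕ):ℝ)) * X ω + ((1:ℕ):ℝ))) ℙ := by
      have he : (fun ω => Real.log ((((1:ℕ):ℝ) + ((1:ℕ):ℝ)) * X ω + ((1:ℕ):ℝ)))
          = fun ω => Real.log (2 * X ω + 1) := by funext ω; norm_num
      rw [he]; exact hint21
    have h := step 1 1 le_rfl i1 i1 i3
    have he1 : (fun ω => Real.log (((1:ℕ):ℝ) * X ω + ((1:ℕ):ℝ)))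
        = fun ω => Real.log (X ω + 1) := by funext ω; norm_num
    have he2 : (fun ω => Real.log ((((1:ℕ):ℝ) + ((1:ℕ):ℝ)) * X ω + ((1:ℕ):ℝ)))
        = fun ω => Real.log (2 * X ω + 1) := by funext ω; norm_num
    rw [he1, he2] at h
    linarith [h, hbase1]
  -- the sum identity
  have hsum : ∀ n, ∑ k ∈ Finset.Ioc 0 (2 ^ n), f n k = ((n : ℝ) + 6) * 2 ^ n * m := by
    intro n
    induction n with
    | zero =>
      simp only [pow_zero]
      rw [show Finset.Ioc 0 1 = {1} from rfl]
      simp only [Finset.sum_singleton, hf, ha0, hb0]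
      push_cast
      rw [hbase2]
      ring
    | succ n ih =>
      have hsplit : Finset.Ioc 0 (2 ^ (n + 1)) =
          Finset.Ioc 0 (2 ^ n) ∪ Finset.Ioc (2 ^ n) (2 ^ (n + 1)) :=
        (Finset.Ioc_union_Ioc_eq_Ioc (Nat.zero_le _) (Nat.pow_le_pow_right (by norm_num) (Nat.le_succ n))).symm
      have hdisj : Disjoint (Finset.Ioc 0 (2 ^ n)) (Finset.Ioc (2 ^ n) (2 ^ (n+1))) := by
        simp [Finset.disjoint_left, Finset.mem_Ioc]
        omega
      rw [hsplit, Finset.sum_union hdisj]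
      -- reindex the second sum
      have hre : ∑ k ∈ Finset.Ioc (2 ^ n) (2 ^ (n + 1)), f (n + 1) k =
          ∑ k ∈ Finset.Ioc 0 (2 ^ n), f (n + 1) (2 ^ n + k) := by
        have hset : Finset.Ioc (2 ^ n) (2 ^ (n + 1)) =
            (Finset.Ioc 0 (2 ^ n)).map (addLeftEmbedding (2 ^ n)) := by
          rw [Finset.map_add_left_Ioc, add_zero, pow_succ, mul_two]
        rw [hset, Finset.sum_map]
        simp only [addLeftEmbedding_apply]
      rw [hre, ← Finset.sum_add_distrib]
      have hterm : ∀ k ∈ Finset.Ioc 0 (2 ^ n),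
          f (n + 1) k + f (n + 1) (2 ^ n + k) = 2 * f n k + 2 * m := by
        intro k hk
        rw [Finset.mem_Ioc] at hk
        have hk1 : 1 ≤ k := hk.1
        have hk2 : k ≤ 2 ^ n := hk.2
        obtain ⟨hA1, hB1⟩ := hrec₁ n k hk1 hk2
        have hle : 2 ^ n + 1 ≤ 2 ^ n + k := by omega
        have hle2 : 2 ^ n + k ≤ 2 ^ (n + 1) := by
          have : 2 ^ (n + 1) = 2 ^ n + 2 ^ n := by ring
          omega
        obtain ⟨hA2, hB2⟩ := hrec₂ n (2 ^ n + k) hle hle2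
        rw [Nat.add_sub_cancel_left] at hA2 hB2
        have hAk := (hpos n k hk1 hk2).1
        -- integrabilities
        have hab := hintab n k hk1 hk2
        have hba : Integrable (fun ω => Real.log ((b n k : ℝ) * X ω + (a n k : ℝ))) ℙ := by
          have := hintab (n + 1) (2 ^ n + k) (by omega) hle2
          rwa [hA2, hB2] at this
        have haba : Integrable (fun ω => Real.log (((a n k : ℝ) + (b n k : ℝ)) * X ω + (a n k : ℝ))) ℙ := by
          have := hintab (n + 1) k hk1 (le_trans hk2 (Nat.pow_le_pow_right (by norm_num) (Nat.le_succ n)))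
          rw [hA1, hB1] at this
          push_cast at this
          exact this
        have h := step (a n k) (b n k) hAk hab hba haba
        have e1 : f (n + 1) k = ∫ ω, Real.log (((a n k : ℝ) + (b n k : ℝ)) * X ω + (a n k : ℝ)) ∂ℙ := by
          simp only [hf, hA1, hB1]
          refine integral_congr_ae (Filter.Eventually.of_forall fun ω => ?_)
          push_cast
          ring_nf
        have e2 : f (n + 1) (2 ^ n + k) = ∫ ω, Real.log ((b n k : ℝ) * X ω + (a n k : ℝ)) ∂ℙ := by
          simp only [hf, hA2, hB2]
        have e3 : f n k = ∫ ω, Real.log ((a n k : ℝ) * X ω + (b n k : ℝ)) ∂ℙ := by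
          simp only [hf]
        rw [e1, e2, e3]
        linarith
      rw [Finset.sum_congr rfl hterm, Finset.sum_add_distrib, Finset.sum_const,
        ← Finset.mul_sum, ih, Nat.card_Ioc]
      simp only [Nat.sub_zero, nsmul_eq_mul]
      push_cast
      ring
  -- conclusion
  intro n
  have hlog : (fun ω => Real.log (∏ k ∈ Finset.Icc 1 (2 ^ n), ((a n k : ℝ) * X ω + (b n k : ℝ))))
      =ᵐ[ℙ] fun ω => ∑ k ∈ Finset.Icc 1 (2 ^ n), Real.log ((a n k : ℝ) * X ω + (b n k : ℝ)) := by
    filter_upwards [hXpos] with ω hω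
    refine Real.log_prod ?_
    intro k hk
    rw [Finset.mem_Icc] at hk
    have h1 := (hpos n k hk.1 hk.2).1
    have h2 := (hpos n k hk.1 hk.2).2
    have ha' : (1:ℝ) ≤ (a n k : ℝ) := by exact_mod_cast h1
    have hb' : (1:ℝ) ≤ (b n k : ℝ) := by exact_mod_cast h2
    have : (0:ℝ) < (a n k : ℝ) * X ω + (b n k : ℝ) := by nlinarith
    exact ne_of_gt this
  have hI : ∫ ω, Real.log (∏ k ∈ Finset.Icc 1 (2 ^ n), ((a n k : ℝ) * X ω + (b n k : ℝ))) ∂ℙ =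
      ((n : ℝ) + 6) * 2 ^ n * m := by
    rw [integral_congr_ae hlog,
      integral_finset_sum _ (fun k hk => by
        rw [Finset.mem_Icc] at hk; exact hintab n k hk.1 hk.2)]
    have : Finset.Icc 1 (2 ^ n) = Finset.Ioc 0 (2 ^ n) := by rw [← Finset.Icc_add_one_left_eq_Ioc, zero_add]
    rw [this]
    exact hsum n
  rw [hI]
  have hne : ((n : ℝ) + 6) * 2 ^ n ≠ 0 := by positivity
  field_simp
end

section
/- Let X be a positive random variable with atomless law satisfying the distributional identity X ~ 1/X + ε with ε ~ Bernoulli(1/2) independent of X, and let c_n = ∏_{k=1}^{2^n} (a(n,k) + b(n,k)) where a, b are the coefficient-pair arrays of the multi-level recursion. Then for every n ≥ 0, (log c_n)/((n+7)·2^n) ≤ E[log X] ≤ (log c_n)/((n+4)·2^n). -/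
open MeasureTheory ProbabilityTheory Real Finset

section LyapAux

variable {Ω : Type*} [MeasureSpace Ω] [IsProbabilityMeasure (ℙ : Measure Ω)]
variable {X ε : Ω → ℝ}

private lemma lyap_pos_affine {p q x : ℝ} (hp : 0 ≤ p) (hq : 0 ≤ q) (hpq : 1 ≤ p + q)
    (hx : 0 < x) : 0 < p * x + q := by
  rcases eq_or_lt_of_le hp with h | h
  · have : 1 ≤ q := by linarith
    nlinarith
  · nlinarith [mul_pos h hx]

private lemma lyap_log_affine_bounds {p q x : ℝ} (hp : 0 ≤ p) (hq : 0 ≤ q) (hpq : 1 ≤ p + q)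
    (hx : 0 < x) :
    Real.log (p + q) + min (Real.log x) 0 ≤ Real.log (p * x + q) ∧
    Real.log (p * x + q) ≤ Real.log (p + q) + max (Real.log x) 0 := by
  have hpq0 : 0 < p + q := lt_of_lt_of_le one_pos hpq
  have hpx : 0 < p * x + q := lyap_pos_affine hp hq hpq hx
  rcases le_total x 1 with hx1 | hx1
  · have hmin : min (Real.log x) 0 = Real.log x := min_eq_left (Real.log_nonpos hx.le hx1)
    have hmax : max (Real.log x) 0 = 0 := max_eq_right (Real.log_nonpos hx.le hx1)
    constructor
    · rw [hmin, ← Real.log_mul (ne_of_gt hpq0) (ne_of_gt hx)]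
      apply Real.log_le_log (by positivity)
      nlinarith
    · rw [hmax, add_zero]
      apply Real.log_le_log hpx
      nlinarith
  · have hmin : min (Real.log x) 0 = 0 := min_eq_right (Real.log_nonneg hx1)
    have hmax : max (Real.log x) 0 = Real.log x := max_eq_left (Real.log_nonneg hx1)
    constructor
    · rw [hmin, add_zero]
      apply Real.log_le_log hpq0
      nlinarith
    · rw [hmax, ← Real.log_mul (ne_of_gt hpq0) (ne_of_gt hx)]
      apply Real.log_le_log hpx
      nlinarith

private lemma lyap_int_affine (hXm : Measurable X) (hXpos : ∀ᵐ ω ∂ℙ, 0 < X ω)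
    (hintX : Integrable (fun ω => Real.log (X ω)) ℙ) {p q : ℝ}
    (hp : 0 ≤ p) (hq : 0 ≤ q) (hpq : 1 ≤ p + q) :
    Integrable (fun ω => Real.log (p * X ω + q)) ℙ := by
  apply Integrable.mono' ((integrable_const |Real.log (p + q)|).add hintX.abs)
  · exact (Real.measurable_log.comp ((hXm.const_mul p).add_const q)).aestronglyMeasurable
  · filter_upwards [hXpos] with ω hω
    obtain ⟨h1, h2⟩ := lyap_log_affine_bounds hp hq hpq hω
    have hmin : -|Real.log (X ω)| ≤ min (Real.log (X ω)) 0 :=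
      le_min (neg_abs_le _) (neg_nonpos.mpr (abs_nonneg _))
    have hmax : max (Real.log (X ω)) 0 ≤ |Real.log (X ω)| :=
      max_le (le_abs_self _) (abs_nonneg _)
    have h3 := neg_abs_le (Real.log (p + q))
    have h4 := le_abs_self (Real.log (p + q))
    rw [Real.norm_eq_abs, abs_le]
    constructor <;> simp only [Pi.add_apply] <;> linarith

private lemma lyap_master (hXm : Measurable X) (hεm : Measurable ε)
    (hε1 : ℙ {ω | ε ω = 1} = 1 / 2) (hε0 : ℙ {ω | ε ω = 0} = 1 / 2)
    (hindep : IndepFun X ε ℙ)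
    (hdist : Measure.map X ℙ = Measure.map (fun ω => 1 / X ω + ε ω) ℙ)
    {g : ℝ → ℝ} (hg : Measurable g)
    (h1 : Integrable (fun ω => g (1 / X ω)) ℙ)
    (h2 : Integrable (fun ω => g (1 / X ω + 1)) ℙ) :
    ∫ ω, g (X ω) ∂ℙ =
      (∫ ω, g (1 / X ω) ∂ℙ) / 2 + (∫ ω, g (1 / X ω + 1) ∂ℙ) / 2 := by
  classical
  have hinv : Measurable fun x : ℝ => 1 / x := by
    simpa [one_div] using (measurable_inv : Measurable fun x : ℝ => x⁻¹)
  have hYm : Measurable fun ω => 1 / X ω + ε ω := (hinv.comp hXm).add hεm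
  have step1 : ∫ ω, g (X ω) ∂ℙ = ∫ ω, g (1 / X ω + ε ω) ∂ℙ := by
    rw [← integral_map hXm.aemeasurable hg.aestronglyMeasurable, hdist,
      integral_map hYm.aemeasurable hg.aestronglyMeasurable]
  -- indicator functions
  set φ : ℝ → ℝ := fun x => if x = 0 then 1 else 0 with hφdef
  set ψ : ℝ → ℝ := fun x => if x = 1 then 1 else 0 with hψdef
  have hφm : Measurable φ := measurable_const.ite (measurableSet_eq) measurable_const
  have hψm : Measurable ψ := measurable_const.ite (measurableSet_eq) measurable_const
  have hs0 : MeasurableSet {ω | ε ω = 0} := hεm (measurableSet_singleton 0)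
  have hs1 : MeasurableSet {ω | ε ω = 1} := hεm (measurableSet_singleton 1)
  have hεae : ∀ᵐ ω ∂ℙ, ε ω = 0 ∨ ε ω = 1 := by
    have hd : Disjoint {ω | ε ω = 0} {ω | ε ω = 1} := by
      rw [Set.disjoint_left]
      rintro ω h0 h1
      simp only [Set.mem_setOf_eq] at h0 h1
      rw [h0] at h1; norm_num at h1
    have hu : ℙ ({ω | ε ω = 0} ∪ {ω | ε ω = 1}) = 1 := by
      rw [measure_union hd hs1, hε0, hε1, ENNReal.add_halves]
    have hcompl : ℙ ({ω | ε ω = 0} ∪ {ω | ε ω = 1})ᶜ = 0 := by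
      rw [measure_compl (hs0.union hs1) (measure_ne_top _ _), hu, measure_univ, tsub_self]
    have : ∀ᵐ ω ∂ℙ, ω ∈ ({ω | ε ω = 0} ∪ {ω | ε ω = 1}) := by
      rw [ae_iff]
      convert hcompl using 2; ext ω; simp
    filter_upwards [this] with ω hω
    simpa using hω
  -- split the integral
  have hkey : (fun ω => g (1 / X ω + ε ω)) =ᵐ[ℙ]
      fun ω => g (1 / X ω) * φ (ε ω) + g (1 / X ω + 1) * ψ (ε ω) := by
    filter_upwards [hεae] with ω hω
    rcases hω with h | h <;> simp [hφdef, hψdef, h]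
  have hbφ : ∀ x, |φ x| ≤ 1 := by
    intro x; simp only [hφdef]; split <;> norm_num
  have hbψ : ∀ x, |ψ x| ≤ 1 := by
    intro x; simp only [hψdef]; split <;> norm_num
  have ip1 : Integrable (fun ω => g (1 / X ω) * φ (ε ω)) ℙ := by
    apply Integrable.mono' h1.abs
      (h1.aestronglyMeasurable.mul (hφm.comp hεm).aestronglyMeasurable)
    filter_upwards with ω
    simp only [Pi.mul_apply, Function.comp_apply, Real.norm_eq_abs, abs_mul]
    calc |g (1 / X ω)| * |φ (ε ω)| ≤ |g (1 / X ω)| * 1 :=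
          mul_le_mul_of_nonneg_left (hbφ _) (abs_nonneg _)
      _ = |g (1 / X ω)| := mul_one _
  have ip2 : Integrable (fun ω => g (1 / X ω + 1) * ψ (ε ω)) ℙ := by
    apply Integrable.mono' h2.abs
      (h2.aestronglyMeasurable.mul (hψm.comp hεm).aestronglyMeasurable)
    filter_upwards with ω
    simp only [Pi.mul_apply, Function.comp_apply, Real.norm_eq_abs, abs_mul]
    calc |g (1 / X ω + 1)| * |ψ (ε ω)| ≤ |g (1 / X ω + 1)| * 1 :=
          mul_le_mul_of_nonneg_left (hbψ _) (abs_nonneg _)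
      _ = |g (1 / X ω + 1)| := mul_one _
  have iφ : Integrable (fun ω => φ (ε ω)) ℙ := by
    have : (fun ω => φ (ε ω)) = Set.indicator {ω | ε ω = 0} (fun _ => (1 : ℝ)) := by
      funext ω; simp [hφdef, Set.indicator_apply]
    rw [this]
    exact (integrable_const (1 : ℝ)).indicator hs0
  have iψ : Integrable (fun ω => ψ (ε ω)) ℙ := by
    have : (fun ω => ψ (ε ω)) = Set.indicator {ω | ε ω = 1} (fun _ => (1 : ℝ)) := by
      funext ω; simp [hψdef, Set.indicator_apply]
    rw [this]
    exact (integrable_const (1 : ℝ)).indicator hs1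
  have intφ : ∫ ω, φ (ε ω) ∂ℙ = 1 / 2 := by
    have h : (fun ω => φ (ε ω)) = Set.indicator {ω | ε ω = 0} (fun _ => (1 : ℝ)) := by
      funext ω; simp [hφdef, Set.indicator_apply]
    rw [h, integral_indicator_const (1 : ℝ) hs0, measureReal_def, hε0]
    norm_num [ENNReal.toReal_div]
  have intψ : ∫ ω, ψ (ε ω) ∂ℙ = 1 / 2 := by
    have h : (fun ω => ψ (ε ω)) = Set.indicator {ω | ε ω = 1} (fun _ => (1 : ℝ)) := by
      funext ω; simp [hψdef, Set.indicator_apply]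
    rw [h, integral_indicator_const (1 : ℝ) hs1, measureReal_def, hε1]
    norm_num [ENNReal.toReal_div]
  have i0 : IndepFun (fun ω => g (1 / X ω)) (fun ω => φ (ε ω)) ℙ :=
    hindep.comp (hg.comp hinv) hφm
  have i1 : IndepFun (fun ω => g (1 / X ω + 1)) (fun ω => ψ (ε ω)) ℙ :=
    hindep.comp (hg.comp (hinv.add_const 1)) hψm
  have e0 : ∫ ω, g (1 / X ω) * φ (ε ω) ∂ℙ = (∫ ω, g (1 / X ω) ∂ℙ) * (1 / 2) := by
    rw [← intφ]
    exact i0.integral_fun_mul_eq_mul_integral h1.aestronglyMeasurable iφ.aestronglyMeasurable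
  have e1 : ∫ ω, g (1 / X ω + 1) * ψ (ε ω) ∂ℙ = (∫ ω, g (1 / X ω + 1) ∂ℙ) * (1 / 2) := by
    rw [← intψ]
    exact i1.integral_fun_mul_eq_mul_integral h2.aestronglyMeasurable iψ.aestronglyMeasurable
  rw [step1, integral_congr_ae hkey, integral_add ip1 ip2, e0, e1]
  ring

private lemma lyap_Trec (hXm : Measurable X) (hεm : Measurable ε)
    (hXpos : ∀ᵐ ω ∂ℙ, 0 < X ω)
    (hε1 : ℙ {ω | ε ω = 1} = 1 / 2) (hε0 : ℙ {ω | ε ω = 0} = 1 / 2)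
    (hindep : IndepFun X ε ℙ)
    (hdist : Measure.map X ℙ = Measure.map (fun ω => 1 / X ω + ε ω) ℙ)
    (hintX : Integrable (fun ω => Real.log (X ω)) ℙ)
    (p q : ℕ) (hpq : 1 ≤ p + q) :
    (∫ ω, Real.log ((q : ℝ) * X ω + (p : ℝ)) ∂ℙ) +
      (∫ ω, Real.log (((p + q : ℕ) : ℝ) * X ω + (p : ℝ)) ∂ℙ) =
    2 * (∫ ω, Real.log ((p : ℝ) * X ω + (q : ℝ)) ∂ℙ) +
      2 * ∫ ω, Real.log (X ω) ∂ℙ := by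
  have hpR : (0 : ℝ) ≤ (p : ℝ) := Nat.cast_nonneg p
  have hqR : (0 : ℝ) ≤ (q : ℝ) := Nat.cast_nonneg q
  have hpqR : (1 : ℝ) ≤ (p : ℝ) + (q : ℝ) := by exact_mod_cast hpq
  have hpqR' : (1 : ℝ) ≤ (q : ℝ) + (p : ℝ) := by linarith
  have hpqR'' : (1 : ℝ) ≤ ((p : ℝ) + (q : ℝ)) + (p : ℝ) := by linarith
  set g : ℝ → ℝ := fun x => Real.log ((p : ℝ) * x + (q : ℝ)) with hgdef
  have hg : Measurable g := Real.measurable_log.comp ((measurable_id.const_mul _).add_const _)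
  have int1 : Integrable (fun ω => Real.log ((q : ℝ) * X ω + (p : ℝ))) ℙ :=
    lyap_int_affine hXm hXpos hintX hqR hpR hpqR'
  have int2 : Integrable (fun ω => Real.log (((p : ℝ) + (q : ℝ)) * X ω + (p : ℝ))) ℙ :=
    lyap_int_affine hXm hXpos hintX (by linarith) hpR hpqR''
  have h1' : (fun ω => g (1 / X ω)) =ᵐ[ℙ]
      fun ω => Real.log ((q : ℝ) * X ω + (p : ℝ)) - Real.log (X ω) := by
    filter_upwards [hXpos] with ω hω
    have hx : X ω ≠ 0 := ne_of_gt hω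
    have hnum : (0 : ℝ) < (q : ℝ) * X ω + (p : ℝ) :=
      lyap_pos_affine hqR hpR hpqR' hω
    have : (p : ℝ) * (1 / X ω) + (q : ℝ) = ((q : ℝ) * X ω + (p : ℝ)) / X ω := by
      field_simp; ring
    simp only [hgdef, this]
    rw [Real.log_div (ne_of_gt hnum) hx]
  have h2' : (fun ω => g (1 / X ω + 1)) =ᵐ[ℙ]
      fun ω => Real.log (((p : ℝ) + (q : ℝ)) * X ω + (p : ℝ)) - Real.log (X ω) := by
    filter_upwards [hXpos] with ω hω
    have hx : X ω ≠ 0 := ne_of_gt hω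
    have hnum : (0 : ℝ) < ((p : ℝ) + (q : ℝ)) * X ω + (p : ℝ) :=
      lyap_pos_affine (by linarith) hpR hpqR'' hω
    have : (p : ℝ) * (1 / X ω + 1) + (q : ℝ) =
        ((((p : ℝ) + (q : ℝ)) * X ω + (p : ℝ))) / X ω := by
      field_simp; ring
    simp only [hgdef, this]
    rw [Real.log_div (ne_of_gt hnum) hx]
  have master := lyap_master hXm hεm hε1 hε0 hindep hdist hg
    ((int1.sub hintX).congr h1'.symm) ((int2.sub hintX).congr h2'.symm)
  rw [integral_congr_ae h1', integral_congr_ae h2',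
    integral_sub int1 hintX, integral_sub int2 hintX] at master
  have hmc : ∫ ω, g (X ω) ∂ℙ = ∫ ω, Real.log ((p : ℝ) * X ω + (q : ℝ)) ∂ℙ := rfl
  rw [hmc] at master
  have hcast : (((p + q : ℕ) : ℝ)) = (p : ℝ) + (q : ℝ) := by push_cast; ring
  rw [hcast]
  linarith

private lemma lyap_posPart (hXm : Measurable X) (hεm : Measurable ε)
    (hXpos : ∀ᵐ ω ∂ℙ, 0 < X ω)
    (hε1 : ℙ {ω | ε ω = 1} = 1 / 2) (hε0 : ℙ {ω | ε ω = 0} = 1 / 2)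
    (hindep : IndepFun X ε ℙ)
    (hdist : Measure.map X ℙ = Measure.map (fun ω => 1 / X ω + ε ω) ℙ)
    (hintX : Integrable (fun ω => Real.log (X ω)) ℙ) :
    ∫ ω, max (Real.log (X ω)) 0 ∂ℙ = 2 * ∫ ω, Real.log (X ω) ∂ℙ := by
  set lam := ∫ ω, Real.log (X ω) ∂ℙ with hlam
  -- E log(X+1) = 4 lam, from Trec with p = 1, q = 0
  have hL : ∫ ω, Real.log (X ω + 1) ∂ℙ = 4 * lam := by
    have h := lyap_Trec hXm hεm hXpos hε1 hε0 hindep hdist hintX 1 0 (by norm_num)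
    have e0 : ∫ ω, Real.log ((0 : ℕ) * X ω + ((1 : ℕ) : ℝ)) ∂ℙ = 0 := by
      simp
    have e1 : ∫ ω, Real.log (((1 + 0 : ℕ) : ℝ) * X ω + ((1 : ℕ) : ℝ)) ∂ℙ
        = ∫ ω, Real.log (X ω + 1) ∂ℙ := by norm_num
    have e2 : ∫ ω, Real.log (((1 : ℕ) : ℝ) * X ω + ((0 : ℕ) : ℝ)) ∂ℙ = lam := by
      simp [hlam]
    rw [e0, e1, e2] at h
    linarith
  set g : ℝ → ℝ := fun x => max (Real.log x) 0 with hgdef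
  have hg : Measurable g := Real.measurable_log.max measurable_const
  have intL1 : Integrable (fun ω => Real.log (1 * X ω + 1)) ℙ :=
    lyap_int_affine hXm hXpos hintX (by norm_num) (by norm_num) (by norm_num)
  have intL : Integrable (fun ω => Real.log (X ω + 1)) ℙ := by
    refine intL1.congr (Filter.Eventually.of_forall fun ω => by norm_num)
  have h1' : (fun ω => g (1 / X ω)) =ᵐ[ℙ] fun ω => max (-Real.log (X ω)) 0 := by
    filter_upwards with ω
    simp [hgdef, one_div, Real.log_inv]
  have h2' : (fun ω => g (1 / X ω + 1)) =ᵐ[ℙ]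
      fun ω => Real.log (X ω + 1) - Real.log (X ω) := by
    filter_upwards [hXpos] with ω hω
    have hx : X ω ≠ 0 := ne_of_gt hω
    have harg : 1 / X ω + 1 = (X ω + 1) / X ω := by field_simp; ring
    have hge : (1 : ℝ) ≤ 1 / X ω + 1 := by
      have : 0 < 1 / X ω := by positivity
      linarith
    simp only [hgdef]
    rw [max_eq_left (Real.log_nonneg hge), harg,
      Real.log_div (by positivity) hx]
  have intNeg : Integrable (fun ω => max (-Real.log (X ω)) 0) ℙ := by
    simpa using hintX.neg.pos_part
  have intPos : Integrable (fun ω => max (Real.log (X ω)) 0) ℙ := by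
    simpa using hintX.pos_part
  have master := lyap_master hXm hεm hε1 hε0 hindep hdist hg
    (intNeg.congr h1'.symm) ((intL.sub hintX).congr h2'.symm)
  rw [integral_congr_ae h1', integral_congr_ae h2',
    integral_sub intL hintX, hL] at master
  have hAB : (∫ ω, max (Real.log (X ω)) 0 ∂ℙ) - (∫ ω, max (-Real.log (X ω)) 0 ∂ℙ)
      = lam := by
    rw [← integral_sub intPos intNeg, hlam]
    apply integral_congr_ae
    filter_upwards with ω
    exact max_zero_sub_max_neg_zero_eq_self _
  have hmc : ∫ ω, g (X ω) ∂ℙ = ∫ ω, max (Real.log (X ω)) 0 ∂ℙ := rfl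
  rw [hmc] at master
  linarith

private lemma lyap_Tbound (hXm : Measurable X) (hXpos : ∀ᵐ ω ∂ℙ, 0 < X ω)
    (hintX : Integrable (fun ω => Real.log (X ω)) ℙ)
    (hA : ∫ ω, max (Real.log (X ω)) 0 ∂ℙ = 2 * ∫ ω, Real.log (X ω) ∂ℙ)
    (p q : ℕ) (hpq : 1 ≤ p + q) :
    Real.log (((p + q : ℕ) : ℝ)) - (∫ ω, Real.log (X ω) ∂ℙ)
        ≤ ∫ ω, Real.log ((p : ℝ) * X ω + (q : ℝ)) ∂ℙ ∧
    ∫ ω, Real.log ((p : ℝ) * X ω + (q : ℝ)) ∂ℙ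
        ≤ Real.log (((p + q : ℕ) : ℝ)) + 2 * ∫ ω, Real.log (X ω) ∂ℙ := by
  set lam := ∫ ω, Real.log (X ω) ∂ℙ with hlam
  have hpR : (0 : ℝ) ≤ (p : ℝ) := Nat.cast_nonneg p
  have hqR : (0 : ℝ) ≤ (q : ℝ) := Nat.cast_nonneg q
  have hpqR : (1 : ℝ) ≤ (p : ℝ) + (q : ℝ) := by exact_mod_cast hpq
  have intT : Integrable (fun ω => Real.log ((p : ℝ) * X ω + (q : ℝ))) ℙ :=
    lyap_int_affine hXm hXpos hintX hpR hqR hpqR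
  have intPos : Integrable (fun ω => max (Real.log (X ω)) 0) ℙ := by
    simpa using hintX.pos_part
  have intMin : Integrable (fun ω => min (Real.log (X ω)) 0) ℙ := by
    have : (fun ω => min (Real.log (X ω)) 0)
        = fun ω => Real.log (X ω) - max (Real.log (X ω)) 0 := by
      funext ω
      rcases le_total (Real.log (X ω)) 0 with h | h <;> simp [min_eq_left, min_eq_right, h] 
    rw [this]
    exact hintX.sub intPos
  have hMin : ∫ ω, min (Real.log (X ω)) 0 ∂ℙ = -lam := by
    have : (fun ω => min (Real.log (X ω)) 0)
        = fun ω => Real.log (X ω) - max (Real.log (X ω)) 0 := by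
      funext ω
      rcases le_total (Real.log (X ω)) 0 with h | h <;> simp [min_eq_left, min_eq_right, h]
    rw [this, integral_sub hintX intPos, hA]
    ring
  have hcast : (((p + q : ℕ) : ℝ)) = (p : ℝ) + (q : ℝ) := by push_cast; ring
  constructor
  · have hle : ∫ ω, (Real.log ((p : ℝ) + (q : ℝ)) + min (Real.log (X ω)) 0) ∂ℙ
        ≤ ∫ ω, Real.log ((p : ℝ) * X ω + (q : ℝ)) ∂ℙ := by
      apply integral_mono_ae ((integrable_const _).add intMin) intT
      filter_upwards [hXpos] with ω hω
      exact (lyap_log_affine_bounds hpR hqR hpqR hω).1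
    rw [integral_add (integrable_const _) intMin, integral_const, hMin] at hle
    simp only [measure_univ, probReal_univ, ENNReal.toReal_one, one_smul] at hle
    rw [hcast]
    linarith
  · have hle : ∫ ω, Real.log ((p : ℝ) * X ω + (q : ℝ)) ∂ℙ
        ≤ ∫ ω, (Real.log ((p : ℝ) + (q : ℝ)) + max (Real.log (X ω)) 0) ∂ℙ := by
      apply integral_mono_ae intT ((integrable_const _).add intPos)
      filter_upwards [hXpos] with ω hω
      exact (lyap_log_affine_bounds hpR hqR hpqR hω).2
    rw [integral_add (integrable_const _) intPos, integral_const, hA] at hle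
    simp only [measure_univ, probReal_univ, ENNReal.toReal_one, one_smul] at hle
    rw [hcast]
    linarith

end LyapAux
/-- Bounds on the Lyapunov exponent `λ = E[log X]` of the Bernoulli(1/2) model in
terms of `c_n = ∏_{k=1}^{2^n} (a(n,k) + b(n,k))`:
`(log c_n)/((n+7)·2^n) ≤ E[log X] ≤ (log c_n)/((n+4)·2^n)` for all `n ≥ 0`. -/
theorem bernoulli_half_lyapunov_bounds
    {Ω : Type*} [MeasureSpace Ω] [IsProbabilityMeasure (ℙ : Measure Ω)]
    (X ε : Ω → ℝ) (hXm : Measurable X) (hεm : Measurable ε)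
    (hXpos : ∀ᵐ ω ∂ℙ, 0 < X ω)
    (hatomless : ∀ x : ℝ, ℙ {ω | X ω = x} = 0)
    (hε1 : ℙ {ω | ε ω = 1} = 1 / 2)
    (hε0 : ℙ {ω | ε ω = 0} = 1 / 2)
    (hindep : IndepFun X ε ℙ)
    (hdist : Measure.map X ℙ = Measure.map (fun ω => 1 / X ω + ε ω) ℙ)
    (a b : ℕ → ℕ → ℕ)
    (ha0 : a 0 1 = 2) (hb0 : b 0 1 = 1)
    (hrec₁ : ∀ n k, 1 ≤ k → k ≤ 2 ^ n →
      a (n + 1) k = a n k + b n k ∧ b (n + 1) k = a n k)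
    (hrec₂ : ∀ n k, 2 ^ n + 1 ≤ k → k ≤ 2 ^ (n + 1) →
      a (n + 1) k = b n (k - 2 ^ n) ∧ b (n + 1) k = a n (k - 2 ^ n))
    (c : ℕ → ℕ)
    (hc : ∀ n, c n = ∏ k ∈ Finset.Icc 1 (2 ^ n), (a n k + b n k))
    (hintX : Integrable (fun ω => Real.log (X ω)) ℙ)
    (hintab : ∀ n k, 1 ≤ k → k ≤ 2 ^ n →
      Integrable (fun ω => Real.log ((a n k : ℝ) * X ω + (b n k : ℝ))) ℙ) :
    ∀ n : ℕ,
      Real.log (c n) / (((n : ℝ) + 7) * 2 ^ n) ≤ ∫ ω, Real.log (X ω) ∂ℙ ∧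
      ∫ ω, Real.log (X ω) ∂ℙ ≤ Real.log (c n) / (((n : ℝ) + 4) * 2 ^ n) := by
  set lam := ∫ ω, Real.log (X ω) ∂ℙ with hlam
  set T : ℕ → ℕ → ℝ := fun p q => ∫ ω, Real.log ((p : ℝ) * X ω + (q : ℝ)) ∂ℙ with hT
  have hA := lyap_posPart hXm hεm hXpos hε1 hε0 hindep hdist hintX
  have hTrec : ∀ p q : ℕ, 1 ≤ p + q →
      T q p + T (p + q) p = 2 * T p q + 2 * lam :=
    fun p q h => lyap_Trec hXm hεm hXpos hε1 hε0 hindep hdist hintX p q h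
  have hTb : ∀ p q : ℕ, 1 ≤ p + q →
      Real.log (((p + q : ℕ) : ℝ)) - lam ≤ T p q ∧
      T p q ≤ Real.log (((p + q : ℕ) : ℝ)) + 2 * lam :=
    fun p q h => lyap_Tbound hXm hXpos hintX hA p q h
  -- a n k + b n k ≥ 1 on the admissible range
  have hab : ∀ n k, 1 ≤ k → k ≤ 2 ^ n → 1 ≤ a n k + b n k := by
    intro n
    induction n with
    | zero =>
      intro k hk1 hk2
      have hk : k = 1 := le_antisymm (by simpa using hk2) hk1
      subst hk
      rw [ha0, hb0]
      norm_num
    | succ n ih =>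
      intro k hk1 hk2
      have hpow : (2 : ℕ) ^ (n + 1) = 2 ^ n + 2 ^ n := by ring
      by_cases hk : k ≤ 2 ^ n
      · obtain ⟨r1, r2⟩ := hrec₁ n k hk1 hk
        have := ih k hk1 hk
        omega
      · push_neg at hk
        obtain ⟨r1, r2⟩ := hrec₂ n k (by omega) hk2
        have h1 : 1 ≤ k - 2 ^ n := by omega
        have h2 : k - 2 ^ n ≤ 2 ^ n := by omega
        have := ih _ h1 h2
        omega
  -- base value T 2 1 = 6 lam
  have hT21 : T 2 1 = 6 * lam := by
    have h11 := hTrec 1 1 (by norm_num)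
    have h10 := hTrec 1 0 (by norm_num)
    have e01 : T 0 1 = 0 := by
      rw [hT]
      simp
    have e10 : T 1 0 = lam := by
      rw [hT, hlam]
      norm_num
    norm_num at h11 h10
    rw [e01, e10] at h10
    linarith
  -- the level sums
  have hS : ∀ n, ∑ k ∈ Finset.Icc 1 (2 ^ n), T (a n k) (b n k)
      = ((n : ℝ) + 6) * 2 ^ n * lam := by
    intro n
    induction n with
    | zero =>
      rw [pow_zero, Finset.Icc_self, Finset.sum_singleton, ha0, hb0, hT21]
      norm_num
    | succ n ih =>
      have hpow : (2 : ℕ) ^ (n + 1) = 2 ^ n + 2 ^ n := by ring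
      have hIoc : ∀ m : ℕ, Finset.Icc 1 m = Finset.Ioc 0 m := by
        intro m; ext x; simp; omega
      have hsplit : ∑ k ∈ Finset.Icc 1 (2 ^ (n + 1)), T (a (n + 1) k) (b (n + 1) k)
          = (∑ k ∈ Finset.Icc 1 (2 ^ n), T (a (n + 1) k) (b (n + 1) k))
            + ∑ k ∈ Finset.Icc 1 (2 ^ n),
                T (a (n + 1) (k + 2 ^ n)) (b (n + 1) (k + 2 ^ n)) := by
        rw [hIoc, hIoc, hpow,
          ← Finset.sum_Ioc_consecutive (fun k => T (a (n + 1) k) (b (n + 1) k))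
            (Nat.zero_le (2 ^ n)) (Nat.le_add_right (2 ^ n) (2 ^ n))]
        congr 1
        refine Finset.sum_nbij' (fun k => k - 2 ^ n) (fun k => k + 2 ^ n) ?_ ?_ ?_ ?_ ?_
        · intro x hx; rw [Finset.mem_Ioc] at hx; rw [Finset.mem_Ioc]; omega
        · intro x hx; rw [Finset.mem_Ioc] at hx; rw [Finset.mem_Ioc]; omega
        · intro x hx; rw [Finset.mem_Ioc] at hx; omega
        · intro x hx; rw [Finset.mem_Ioc] at hx; omega
        · intro x hx
          rw [Finset.mem_Ioc] at hx
          have hx' : x - 2 ^ n + 2 ^ n = x := by omega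
          rw [hx']
      have hterm : ∀ k ∈ Finset.Icc 1 (2 ^ n),
          T (a (n + 1) k) (b (n + 1) k)
            + T (a (n + 1) (k + 2 ^ n)) (b (n + 1) (k + 2 ^ n))
          = 2 * T (a n k) (b n k) + 2 * lam := by
        intro k hk
        rw [Finset.mem_Icc] at hk
        obtain ⟨r1, r2⟩ := hrec₁ n k hk.1 hk.2
        obtain ⟨r3, r4⟩ := hrec₂ n (k + 2 ^ n) (by omega) (by omega)
        have hsub : k + 2 ^ n - 2 ^ n = k := by omega
        rw [r1, r2, r3, r4, hsub]
        have := hTrec (a n k) (b n k) (hab n k hk.1 hk.2)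
        linarith
      rw [hsplit, ← Finset.sum_add_distrib, Finset.sum_congr rfl hterm,
        Finset.sum_add_distrib, ← Finset.mul_sum, ih, Finset.sum_const,
        Nat.card_Icc]
      simp only [Nat.add_sub_cancel, nsmul_eq_mul]
      push_cast [pow_succ]
      ring
  intro n
  have hcard : (Finset.Icc 1 (2 ^ n)).card = 2 ^ n := by
    simp [Nat.card_Icc]
  have hlogc : Real.log ((c n : ℝ))
      = ∑ k ∈ Finset.Icc 1 (2 ^ n), Real.log (((a n k + b n k : ℕ) : ℝ)) := by
    rw [hc n, Nat.cast_prod, Real.log_prod]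
    intro k hk
    rw [Finset.mem_Icc] at hk
    have h := hab n k hk.1 hk.2
    exact Nat.cast_ne_zero.mpr (by omega)
  have hlow : Real.log ((c n : ℝ)) - (2 ^ n : ℝ) * lam
      ≤ ((n : ℝ) + 6) * 2 ^ n * lam := by
    rw [← hS n]
    have h1 : ∑ k ∈ Finset.Icc 1 (2 ^ n),
        (Real.log (((a n k + b n k : ℕ) : ℝ)) - lam)
        ≤ ∑ k ∈ Finset.Icc 1 (2 ^ n), T (a n k) (b n k) := by
      apply Finset.sum_le_sum
      intro k hk
      rw [Finset.mem_Icc] at hk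
      exact (hTb _ _ (hab n k hk.1 hk.2)).1
    rw [Finset.sum_sub_distrib, Finset.sum_const, hcard, nsmul_eq_mul, ← hlogc] at h1
    push_cast at h1 ⊢
    linarith
  have hhigh : ((n : ℝ) + 6) * 2 ^ n * lam
      ≤ Real.log ((c n : ℝ)) + (2 ^ n : ℝ) * (2 * lam) := by
    rw [← hS n]
    have h1 : ∑ k ∈ Finset.Icc 1 (2 ^ n), T (a n k) (b n k)
        ≤ ∑ k ∈ Finset.Icc 1 (2 ^ n),
            (Real.log (((a n k + b n k : ℕ) : ℝ)) + 2 * lam) := by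
      apply Finset.sum_le_sum
      intro k hk
      rw [Finset.mem_Icc] at hk
      exact (hTb _ _ (hab n k hk.1 hk.2)).2
    rw [Finset.sum_add_distrib, Finset.sum_const, hcard, nsmul_eq_mul, ← hlogc] at h1
    push_cast at h1 ⊢
    linarith
  have hpos7 : (0 : ℝ) < ((n : ℝ) + 7) * 2 ^ n := by positivity
  have hpos4 : (0 : ℝ) < ((n : ℝ) + 4) * 2 ^ n := by positivity
  constructor
  · rw [div_le_iff₀ hpos7]
    have hid : lam * (((n : ℝ) + 7) * 2 ^ n)
        = ((n : ℝ) + 6) * 2 ^ n * lam + (2 ^ n : ℝ) * lam := by ring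
    linarith
  · rw [le_div_iff₀ hpos4]
    have hid : lam * (((n : ℝ) + 4) * 2 ^ n)
        = ((n : ℝ) + 6) * 2 ^ n * lam - (2 ^ n : ℝ) * (2 * lam) := by ring
    linarith
end

section
/- Let X be a positive random variable with atomless law satisfying the distributional identity X ~ 1/X + ε with ε ~ Bernoulli(1/2) independent of X, and set p_n = (log c_n)/((n+7)·2^n) and q_n = (log c_n)/((n+4)·2^n), where c_n = ∏_{k=1}^{2^n} (a(n,k) + b(n,k)) with a, b the coefficient-pair arrays of the multi-level recursion. Then lim_{n→∞} p_n = lim_{n→∞} q_n = E[log X]. -/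
open MeasureTheory ProbabilityTheory Real Finset Filter

lemma aux_key {Ω : Type*} [MeasureSpace Ω] [IsProbabilityMeasure (ℙ : Measure Ω)]
    (X ε : Ω → ℝ) (hXm : Measurable X) (hεm : Measurable ε)
    (hXpos : ∀ᵐ ω ∂ℙ, 0 < X ω)
    (hε1 : ℙ {ω | ε ω = 1} = 1 / 2)
    (hε0 : ℙ {ω | ε ω = 0} = 1 / 2)
    (hindep : IndepFun X ε ℙ)
    (hdist : Measure.map X ℙ = Measure.map (fun ω => 1 / X ω + ε ω) ℙ)
    (A B : ℝ) (hA : 1 ≤ A) (hB : 1 ≤ B)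
    (h1 : Integrable (fun ω => Real.log (B * X ω + A)) ℙ)
    (h2 : Integrable (fun ω => Real.log ((A + B) * X ω + A)) ℙ)
    (hintX : Integrable (fun ω => Real.log (X ω)) ℙ) :
    ∫ ω, Real.log (A * X ω + B) ∂ℙ
      = (∫ ω, Real.log (B * X ω + A) ∂ℙ + ∫ ω, Real.log ((A + B) * X ω + A) ∂ℙ) / 2
        - ∫ ω, Real.log (X ω) ∂ℙ := by
  have hApos : (0:ℝ) < A := lt_of_lt_of_le one_pos hA
  have hBpos : (0:ℝ) < B := lt_of_lt_of_le one_pos hB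
  -- measurable g
  have hg : Measurable (fun x : ℝ => Real.log (A * x + B)) :=
    Real.measurable_log.comp ((measurable_id.const_mul A).add_const B)
  have hYm : Measurable (fun ω => 1 / X ω + ε ω) :=
    (measurable_const.div hXm).add hεm
  -- step 1 : transfer by distribution
  have step1 : ∫ ω, Real.log (A * X ω + B) ∂ℙ
      = ∫ ω, Real.log (A * (1 / X ω + ε ω) + B) ∂ℙ := by
    rw [← integral_map hXm.aemeasurable hg.aestronglyMeasurable, hdist,
      integral_map hYm.aemeasurable hg.aestronglyMeasurable]
  -- ε ∈ {0,1} a.e.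
  have hs0 : MeasurableSet {ω | ε ω = 0} := hεm (measurableSet_singleton 0)
  have hs1 : MeasurableSet {ω | ε ω = 1} := hεm (measurableSet_singleton 1)
  have hdisj : Disjoint {ω | ε ω = 0} {ω | ε ω = 1} := by
    rw [Set.disjoint_left]
    rintro ω (h0 : ε ω = 0) (h1 : ε ω = 1)
    rw [h0] at h1; norm_num at h1
  have hunion : ℙ ({ω | ε ω = 0} ∪ {ω | ε ω = 1}) = 1 := by
    rw [measure_union hdisj hs1, hε0, hε1]
    rw [ENNReal.div_add_div_same, one_add_one_eq_two]
    exact ENNReal.div_self (by norm_num) (by norm_num)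
  have hε01 : ∀ᵐ ω ∂ℙ, ε ω = 0 ∨ ε ω = 1 := by
    have : ℙ ({ω | ε ω = 0} ∪ {ω | ε ω = 1})ᶜ = 0 := by
      rw [prob_compl_eq_zero_iff (hs0.union hs1)]; exact hunion
    rw [ae_iff]
    have hset : {ω | ¬(ε ω = 0 ∨ ε ω = 1)} = ({ω | ε ω = 0} ∪ {ω | ε ω = 1})ᶜ := by
      ext ω; simp [not_or]
    rw [hset]; exact this
  -- indicator functions
  set χ0 : Ω → ℝ := fun ω => if ε ω = 0 then 1 else 0 with hχ0
  set χ1 : Ω → ℝ := fun ω => if ε ω = 1 then 1 else 0 with hχ1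
  set f0 : Ω → ℝ := fun ω => Real.log (B * X ω + A) - Real.log (X ω) with hf0
  set f1 : Ω → ℝ := fun ω => Real.log ((A + B) * X ω + A) - Real.log (X ω) with hf1
  have hif0 : Integrable f0 ℙ := h1.sub hintX
  have hif1 : Integrable f1 ℙ := h2.sub hintX
  -- pointwise identity
  have step2 : (fun ω => Real.log (A * (1 / X ω + ε ω) + B))
      =ᵐ[ℙ] fun ω => f0 ω * χ0 ω + f1 ω * χ1 ω := by
    filter_upwards [hXpos, hε01] with ω hx he
    have hxne : X ω ≠ 0 := ne_of_gt hx
    rcases he with he | he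
    · have : A * (1 / X ω + ε ω) + B = (B * X ω + A) / X ω := by
        rw [he]; field_simp; ring
      rw [this, Real.log_div (by positivity) hxne]
      simp [hχ0, hχ1, hf0, he]
    · have : A * (1 / X ω + ε ω) + B = ((A + B) * X ω + A) / X ω := by
        rw [he]; field_simp; ring
      rw [this, Real.log_div (by positivity) hxne]
      simp [hχ0, hχ1, hf0, hf1, he]
  -- integrability of products via independence
  have hφ0 : Measurable (fun x : ℝ => Real.log (B * x + A) - Real.log x) :=
    (Real.measurable_log.comp ((measurable_id.const_mul B).add_const A)).sub Real.measurable_log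
  have hφ1 : Measurable (fun x : ℝ => Real.log ((A + B) * x + A) - Real.log x) :=
    (Real.measurable_log.comp ((measurable_id.const_mul (A+B)).add_const A)).sub Real.measurable_log
  have hψ0 : Measurable (fun e : ℝ => if e = 0 then (1:ℝ) else 0) :=
    Measurable.ite (measurableSet_eq) measurable_const measurable_const
  have hψ1 : Measurable (fun e : ℝ => if e = 1 then (1:ℝ) else 0) :=
    Measurable.ite (measurableSet_eq) measurable_const measurable_const
  have hind0 : IndepFun f0 χ0 ℙ := hindep.comp hφ0 hψ0
  have hind1 : IndepFun f1 χ1 ℙ := hindep.comp hφ1 hψ1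
  have hiχ0 : Integrable χ0 ℙ := by
    have : χ0 = Set.indicator {ω | ε ω = 0} (fun _ => (1:ℝ)) := by
      ext ω; simp [hχ0, Set.indicator_apply, Set.mem_setOf_eq]
    rw [this]
    exact (integrable_const (1:ℝ)).indicator hs0
  have hiχ1 : Integrable χ1 ℙ := by
    have : χ1 = Set.indicator {ω | ε ω = 1} (fun _ => (1:ℝ)) := by
      ext ω; simp [hχ1, Set.indicator_apply, Set.mem_setOf_eq]
    rw [this]
    exact (integrable_const (1:ℝ)).indicator hs1
  have hip0 : Integrable (fun ω => f0 ω * χ0 ω) ℙ := hind0.integrable_mul hif0 hiχ0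
  have hip1 : Integrable (fun ω => f1 ω * χ1 ω) ℙ := hind1.integrable_mul hif1 hiχ1
  -- compute integrals of indicators
  have hIχ0 : ∫ ω, χ0 ω ∂ℙ = 1 / 2 := by
    have : χ0 = Set.indicator {ω | ε ω = 0} (fun _ => (1:ℝ)) := by
      ext ω; simp [hχ0, Set.indicator_apply, Set.mem_setOf_eq]
    rw [this, integral_indicator_const _ hs0, measureReal_def, hε0]
    simp
  have hIχ1 : ∫ ω, χ1 ω ∂ℙ = 1 / 2 := by
    have : χ1 = Set.indicator {ω | ε ω = 1} (fun _ => (1:ℝ)) := by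
      ext ω; simp [hχ1, Set.indicator_apply, Set.mem_setOf_eq]
    rw [this, integral_indicator_const _ hs1, measureReal_def, hε1]
    simp
  have e0 : ∫ ω, f0 ω * χ0 ω ∂ℙ = (∫ ω, f0 ω ∂ℙ) * (1/2) := by
    rw [hind0.integral_fun_mul_eq_mul_integral hif0.aestronglyMeasurable hiχ0.aestronglyMeasurable, hIχ0]
  have e1 : ∫ ω, f1 ω * χ1 ω ∂ℙ = (∫ ω, f1 ω ∂ℙ) * (1/2) := by
    rw [hind1.integral_fun_mul_eq_mul_integral hif1.aestronglyMeasurable hiχ1.aestronglyMeasurable, hIχ1]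
  have hF0 : ∫ ω, f0 ω ∂ℙ = ∫ ω, Real.log (B * X ω + A) ∂ℙ - ∫ ω, Real.log (X ω) ∂ℙ :=
    integral_sub h1 hintX
  have hF1 : ∫ ω, f1 ω ∂ℙ = ∫ ω, Real.log ((A + B) * X ω + A) ∂ℙ - ∫ ω, Real.log (X ω) ∂ℙ :=
    integral_sub h2 hintX
  rw [step1, integral_congr_ae step2, integral_add hip0 hip1, e0, e1, hF0, hF1]
  ring

lemma aux_logbound (A B x : ℝ) (hA : 1 ≤ A) (hB : 1 ≤ B) (hx : 0 < x) :
    |Real.log (A * x + B) - Real.log (A + B)| ≤ |Real.log x| := by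
  have hApos : (0:ℝ) < A := by linarith
  have hBpos : (0:ℝ) < B := by linarith
  have hAB : (0:ℝ) < A + B := by linarith
  have hAxB : (0:ℝ) < A * x + B := by positivity
  rcases le_total 1 x with h | h
  · have l1 : Real.log (A + B) ≤ Real.log (A * x + B) :=
      Real.log_le_log hAB (by nlinarith)
    have l2 : Real.log (A * x + B) ≤ Real.log ((A + B) * x) :=
      Real.log_le_log hAxB (by nlinarith)
    rw [Real.log_mul (ne_of_gt hAB) (by linarith)] at l2
    have hlx : 0 ≤ Real.log x := Real.log_nonneg h
    rw [abs_of_nonneg hlx, abs_le]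
    constructor <;> linarith
  · have l1 : Real.log ((A + B) * x) ≤ Real.log (A * x + B) :=
      Real.log_le_log (by positivity) (by nlinarith)
    have l2 : Real.log (A * x + B) ≤ Real.log (A + B) :=
      Real.log_le_log hAxB (by nlinarith)
    rw [Real.log_mul (ne_of_gt hAB) (ne_of_gt hx)] at l1
    have hlx : Real.log x ≤ 0 := Real.log_nonpos (le_of_lt hx) h
    rw [abs_of_nonpos hlx, abs_le]
    constructor <;> linarith

lemma aux_tendsto (I K : ℝ) (f : ℕ → ℝ)
    (h : ∀ n : ℕ, |f n - I| ≤ K / ((n : ℝ) + 1)) : Tendsto f atTop (nhds I) := by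
  have h0 : Tendsto (fun n : ℕ => K / ((n : ℝ) + 1)) atTop (nhds 0) := by
    apply Tendsto.div_atTop tendsto_const_nhds
    exact tendsto_atTop_add_const_right atTop 1 tendsto_natCast_atTop_atTop
  have h1 : Tendsto (fun n : ℕ => f n - I) atTop (nhds 0) :=
    squeeze_zero_norm (fun n => h n) h0
  have := h1.add_const I
  simpa using this

/-- The bounds `p_n = (log c_n)/((n+7)·2^n)` and `q_n = (log c_n)/((n+4)·2^n)`
both converge to `E[log X]` as `n → ∞` for the Bernoulli(1/2) model. -/
theorem bernoulli_half_bounds_converge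
    {Ω : Type*} [MeasureSpace Ω] [IsProbabilityMeasure (ℙ : Measure Ω)]
    (X ε : Ω → ℝ) (hXm : Measurable X) (hεm : Measurable ε)
    (hXpos : ∀ᵐ ω ∂ℙ, 0 < X ω)
    (hatomless : ∀ x : ℝ, ℙ {ω | X ω = x} = 0)
    (hε1 : ℙ {ω | ε ω = 1} = 1 / 2)
    (hε0 : ℙ {ω | ε ω = 0} = 1 / 2)
    (hindep : IndepFun X ε ℙ)
    (hdist : Measure.map X ℙ = Measure.map (fun ω => 1 / X ω + ε ω) ℙ)
    (a b : ℕ → ℕ → ℕ)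
    (ha0 : a 0 1 = 2) (hb0 : b 0 1 = 1)
    (hrec₁ : ∀ n k, 1 ≤ k → k ≤ 2 ^ n →
      a (n + 1) k = a n k + b n k ∧ b (n + 1) k = a n k)
    (hrec₂ : ∀ n k, 2 ^ n + 1 ≤ k → k ≤ 2 ^ (n + 1) →
      a (n + 1) k = b n (k - 2 ^ n) ∧ b (n + 1) k = a n (k - 2 ^ n))
    (c : ℕ → ℕ)
    (hc : ∀ n, c n = ∏ k ∈ Finset.Icc 1 (2 ^ n), (a n k + b n k))
    (hintX : Integrable (fun ω => Real.log (X ω)) ℙ)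
    (hintab : ∀ n k, 1 ≤ k → k ≤ 2 ^ n →
      Integrable (fun ω => Real.log ((a n k : ℝ) * X ω + (b n k : ℝ))) ℙ) :
    Tendsto (fun n : ℕ => Real.log (c n) / (((n : ℝ) + 7) * 2 ^ n)) atTop
      (nhds (∫ ω, Real.log (X ω) ∂ℙ)) ∧
    Tendsto (fun n : ℕ => Real.log (c n) / (((n : ℝ) + 4) * 2 ^ n)) atTop
      (nhds (∫ ω, Real.log (X ω) ∂ℙ)) := by
  set I : ℝ := ∫ ω, Real.log (X ω) ∂ℙ with hI
  set C : ℝ := ∫ ω, |Real.log (X ω)| ∂ℙ with hC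
  have hCnonneg : 0 ≤ C := integral_nonneg fun ω => abs_nonneg _
  -- positivity of coefficients
  have hab1 : ∀ n k, 1 ≤ k → k ≤ 2 ^ n → 1 ≤ a n k ∧ 1 ≤ b n k := by
    intro n
    induction n with
    | zero =>
      intro k h1 h2
      simp only [pow_zero] at h2
      have : k = 1 := le_antisymm h2 h1
      subst this
      rw [ha0, hb0]; omega
    | succ n ih =>
      intro k h1 h2
      have h2pow : 2 ^ (n + 1) = 2 ^ n + 2 ^ n := by rw [pow_succ]; ring
      by_cases hk : k ≤ 2 ^ n
      · obtain ⟨e1, e2⟩ := hrec₁ n k h1 hk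
        rw [e1, e2]
        have := ih k h1 hk
        omega
      · have hk' : 2 ^ n + 1 ≤ k := by omega
        obtain ⟨e1, e2⟩ := hrec₂ n k hk' h2
        rw [e1, e2]
        have := ih (k - 2 ^ n) (by omega) (by omega)
        omega
  -- the sum of expectations
  set S : ℕ → ℝ := fun n => ∑ k ∈ Finset.Icc 1 (2 ^ n),
      ∫ ω, Real.log ((a n k : ℝ) * X ω + (b n k : ℝ)) ∂ℙ with hSdef
  -- per-pair identity
  have hpair : ∀ n k, 1 ≤ k → k ≤ 2 ^ n →
      ∫ ω, Real.log ((a n k : ℝ) * X ω + (b n k : ℝ)) ∂ℙ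
        = (∫ ω, Real.log ((b n k : ℝ) * X ω + (a n k : ℝ)) ∂ℙ
            + ∫ ω, Real.log (((a n k : ℝ) + (b n k : ℝ)) * X ω + (a n k : ℝ)) ∂ℙ) / 2 - I := by
    intro n k h1 h2
    have h2pow : 2 ^ (n + 1) = 2 ^ n + 2 ^ n := by rw [pow_succ]; ring
    obtain ⟨hA1, hB1⟩ := hab1 n k h1 h2
    obtain ⟨e1, e2⟩ := hrec₁ n k h1 h2
    obtain ⟨e1', e2'⟩ := hrec₂ n (k + 2 ^ n) (by omega) (by omega)
    have hsub : k + 2 ^ n - 2 ^ n = k := by omega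
    rw [hsub] at e1' e2'
    have hint1 : Integrable (fun ω => Real.log ((b n k : ℝ) * X ω + (a n k : ℝ))) ℙ := by
      have := hintab (n + 1) (k + 2 ^ n) (by omega) (by omega)
      rwa [e1', e2'] at this
    have hint2 : Integrable
        (fun ω => Real.log (((a n k : ℝ) + (b n k : ℝ)) * X ω + (a n k : ℝ))) ℙ := by
      have := hintab (n + 1) k (by omega) (by omega)
      rw [e1, e2] at this
      push_cast at this
      exact this
    exact aux_key X ε hXm hεm hXpos hε1 hε0 hindep hdist (a n k : ℝ) (b n k : ℝ)
      (by exact_mod_cast hA1) (by exact_mod_cast hB1) hint1 hint2 hintX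
  -- recursion for S
  have hSrec : ∀ n, S (n + 1) = 2 * S n + 2 ^ (n + 1) * I := by
    intro n
    have h2pow : 2 ^ (n + 1) = 2 ^ n + 2 ^ n := by rw [pow_succ]; ring
    have hIccIoc : ∀ N : ℕ, Finset.Icc 1 N = Finset.Ioc 0 N := by
      intro N; ext x; simp [Finset.mem_Icc, Finset.mem_Ioc]; omega
    have hsplit : Finset.Icc 1 (2 ^ (n + 1))
        = Finset.Icc 1 (2 ^ n) ∪ Finset.Ioc (2 ^ n) (2 ^ (n + 1)) := by
      rw [hIccIoc, hIccIoc]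
      exact (Finset.Ioc_union_Ioc_eq_Ioc (Nat.zero_le _)
        (Nat.pow_le_pow_right (by norm_num) (Nat.le_succ n))).symm
    have hdisj : Disjoint (Finset.Icc 1 (2 ^ n)) (Finset.Ioc (2 ^ n) (2 ^ (n + 1))) := by
      rw [Finset.disjoint_left]
      intro k hk hk'
      simp only [Finset.mem_Icc] at hk
      simp only [Finset.mem_Ioc] at hk'
      omega
    have hmap : Finset.Ioc (2 ^ n) (2 ^ (n + 1))
        = Finset.map (addLeftEmbedding (2 ^ n)) (Finset.Icc 1 (2 ^ n)) := by
      have : Finset.Icc 1 (2 ^ n) = Finset.Ioc 0 (2 ^ n) := by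
        ext x; simp [Finset.mem_Icc, Finset.mem_Ioc]; omega
      rw [this, Finset.map_add_left_Ioc]
      congr 1 <;> omega
    simp only [hSdef]
    rw [hsplit, Finset.sum_union hdisj, hmap, Finset.sum_map]
    have hterm1 : ∀ k ∈ Finset.Icc 1 (2 ^ n),
        ∫ ω, Real.log ((a (n + 1) k : ℝ) * X ω + (b (n + 1) k : ℝ)) ∂ℙ
          = ∫ ω, Real.log (((a n k : ℝ) + (b n k : ℝ)) * X ω + (a n k : ℝ)) ∂ℙ := by
      intro k hk
      simp only [Finset.mem_Icc] at hk
      obtain ⟨e1, e2⟩ := hrec₁ n k hk.1 hk.2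
      rw [e1, e2]
      push_cast
      refine integral_congr_ae (Filter.Eventually.of_forall fun ω => ?_)
      ring_nf
    have hterm2 : ∀ k ∈ Finset.Icc 1 (2 ^ n),
        ∫ ω, Real.log ((a (n + 1) (addLeftEmbedding (2 ^ n) k) : ℝ) * X ω
            + (b (n + 1) (addLeftEmbedding (2 ^ n) k) : ℝ)) ∂ℙ
          = ∫ ω, Real.log ((b n k : ℝ) * X ω + (a n k : ℝ)) ∂ℙ := by
      intro k hk
      simp only [Finset.mem_Icc] at hk
      have hemb : (addLeftEmbedding (2 ^ n) k) = 2 ^ n + k := rfl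
      obtain ⟨e1, e2⟩ := hrec₂ n (2 ^ n + k) (by omega) (by omega)
      have hsub : 2 ^ n + k - 2 ^ n = k := by omega
      rw [hsub] at e1 e2
      rw [hemb, e1, e2]
    rw [Finset.sum_congr rfl hterm1, Finset.sum_congr rfl hterm2]
    rw [← Finset.sum_add_distrib]
    have : ∀ k ∈ Finset.Icc 1 (2 ^ n),
        (∫ ω, Real.log (((a n k : ℝ) + (b n k : ℝ)) * X ω + (a n k : ℝ)) ∂ℙ
          + ∫ ω, Real.log ((b n k : ℝ) * X ω + (a n k : ℝ)) ∂ℙ)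
        = 2 * (∫ ω, Real.log ((a n k : ℝ) * X ω + (b n k : ℝ)) ∂ℙ) + 2 * I := by
      intro k hk
      simp only [Finset.mem_Icc] at hk
      have := hpair n k hk.1 hk.2
      linarith
    rw [Finset.sum_congr rfl this, Finset.sum_add_distrib, Finset.sum_const,
      ← Finset.mul_sum]
    have hcard : (Finset.Icc 1 (2 ^ n)).card = 2 ^ n := by
      simp [Nat.card_Icc]
    rw [hcard]
    push_cast [h2pow]
    ring
  -- closed form for S
  have hSn : ∀ n : ℕ, S n = 2 ^ n * (S 0 + n * I) := by
    intro n
    induction n with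
    | zero => simp
    | succ n ih =>
      rw [hSrec n, ih]
      push_cast
      ring
  -- bound between log c and S
  have hbound : ∀ n : ℕ, |Real.log (c n) - S n| ≤ 2 ^ n * C := by
    intro n
    have hlogc : Real.log (c n) = ∑ k ∈ Finset.Icc 1 (2 ^ n),
        Real.log ((a n k : ℝ) + (b n k : ℝ)) := by
      rw [hc n]
      push_cast
      rw [Real.log_prod]
      intro k hk
      simp only [Finset.mem_Icc] at hk
      obtain ⟨hA1, hB1⟩ := hab1 n k hk.1 hk.2
      have : (1:ℝ) ≤ (a n k : ℝ) := by exact_mod_cast hA1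
      have : (1:ℝ) ≤ (b n k : ℝ) := by exact_mod_cast hB1
      positivity
    rw [hlogc]
    simp only [hSdef]
    rw [← Finset.sum_sub_distrib]
    calc |∑ k ∈ Finset.Icc 1 (2 ^ n),
          (Real.log ((a n k : ℝ) + (b n k : ℝ))
            - ∫ ω, Real.log ((a n k : ℝ) * X ω + (b n k : ℝ)) ∂ℙ)|
        ≤ ∑ k ∈ Finset.Icc 1 (2 ^ n),
          |Real.log ((a n k : ℝ) + (b n k : ℝ))
            - ∫ ω, Real.log ((a n k : ℝ) * X ω + (b n k : ℝ)) ∂ℙ| :=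
        Finset.abs_sum_le_sum_abs _ _
      _ ≤ ∑ k ∈ Finset.Icc 1 (2 ^ n), C := by
        apply Finset.sum_le_sum
        intro k hk
        simp only [Finset.mem_Icc] at hk
        obtain ⟨hA1, hB1⟩ := hab1 n k hk.1 hk.2
        have hA1' : (1:ℝ) ≤ (a n k : ℝ) := by exact_mod_cast hA1
        have hB1' : (1:ℝ) ≤ (b n k : ℝ) := by exact_mod_cast hB1
        have hint := hintab n k hk.1 hk.2
        have hconst : ∫ (_ : Ω), Real.log ((a n k : ℝ) + (b n k : ℝ)) ∂ℙ
            = Real.log ((a n k : ℝ) + (b n k : ℝ)) := by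
          simp
        rw [abs_sub_comm, ← hconst, ← integral_sub hint (integrable_const _)]
        calc |∫ ω, (Real.log ((a n k : ℝ) * X ω + (b n k : ℝ))
              - Real.log ((a n k : ℝ) + (b n k : ℝ))) ∂ℙ|
            ≤ ∫ ω, |Real.log ((a n k : ℝ) * X ω + (b n k : ℝ))
              - Real.log ((a n k : ℝ) + (b n k : ℝ))| ∂ℙ := by
              simpa [Real.norm_eq_abs] using norm_integral_le_integral_norm
                (μ := (ℙ : Measure Ω)) (fun ω => Real.log ((a n k : ℝ) * X ω + (b n k : ℝ))
                  - Real.log ((a n k : ℝ) + (b n k : ℝ)))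
          _ ≤ ∫ ω, |Real.log (X ω)| ∂ℙ := by
            apply integral_mono_ae ((hint.sub (integrable_const _)).abs) hintX.abs
            filter_upwards [hXpos] with ω hx
            exact aux_logbound _ _ _ hA1' hB1' hx
      _ = 2 ^ n * C := by
        rw [Finset.sum_const]
        have hcard : (Finset.Icc 1 (2 ^ n)).card = 2 ^ n := by simp [Nat.card_Icc]
        rw [hcard]
        push_cast
        ring
  -- final limit argument
  have hlim : ∀ m : ℝ, 1 ≤ m →
      Tendsto (fun n : ℕ => Real.log (c n) / (((n : ℝ) + m) * 2 ^ n)) atTop (nhds I) := by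
    intro m hm
    set K : ℝ := C + |S 0 - m * I| with hK
    apply aux_tendsto I K
    intro n
    have h2pos : (0:ℝ) < 2 ^ n := by positivity
    have hden : (0:ℝ) < ((n : ℝ) + m) * 2 ^ n := by positivity
    have hnm : (0:ℝ) < (n : ℝ) + m := by positivity
    have heq : Real.log (c n) / (((n : ℝ) + m) * 2 ^ n) - I
        = (Real.log (c n) - S n + 2 ^ n * (S 0 - m * I)) / (((n : ℝ) + m) * 2 ^ n) := by
      rw [hSn n]
      field_simp
      ring
    rw [heq, abs_div, abs_of_pos hden]
    have hK0 : 0 ≤ K := add_nonneg hCnonneg (abs_nonneg _)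
    calc |Real.log (c n) - S n + 2 ^ n * (S 0 - m * I)| / (((n : ℝ) + m) * 2 ^ n)
        ≤ (2 ^ n * C + 2 ^ n * |S 0 - m * I|) / (((n : ℝ) + m) * 2 ^ n) := by
          gcongr
          calc |Real.log (c n) - S n + 2 ^ n * (S 0 - m * I)|
              ≤ |Real.log (c n) - S n| + |2 ^ n * (S 0 - m * I)| := abs_add_le _ _
            _ ≤ 2 ^ n * C + 2 ^ n * |S 0 - m * I| := by
                rw [abs_mul, abs_of_pos h2pos]
                exact add_le_add (hbound n) le_rfl
      _ = K / ((n : ℝ) + m) := by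
          rw [hK]
          field_simp
      _ ≤ K / ((n : ℝ) + 1) := by
          gcongr
  refine ⟨hlim 7 (by norm_num), hlim 4 (by norm_num)⟩
end

section
/- Let a, b be the coefficient-pair arrays of the multi-level recursion. Then for every n ≥ 0 and every k with 1 ≤ k ≤ 2^n, the first coefficient pair of row n dominates: a(n,1) ≥ a(n,k) and b(n,1) ≥ b(n,k). -/
open Finset

/-- The first coefficient pair of each row of the multi-level recursion dominates
the other pairs in that row: `a(n,1) ≥ a(n,k)` and `b(n,1) ≥ b(n,k)` for `1 ≤ k ≤ 2^n`. -/
theorem multilevel_first_pair_dominates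
    (a b : ℕ → ℕ → ℕ)
    (ha0 : a 0 1 = 2) (hb0 : b 0 1 = 1)
    (hrec₁ : ∀ n k, 1 ≤ k → k ≤ 2 ^ n →
      a (n + 1) k = a n k + b n k ∧ b (n + 1) k = a n k)
    (hrec₂ : ∀ n k, 2 ^ n + 1 ≤ k → k ≤ 2 ^ (n + 1) →
      a (n + 1) k = b n (k - 2 ^ n) ∧ b (n + 1) k = a n (k - 2 ^ n)) :
    ∀ n k, 1 ≤ k → k ≤ 2 ^ n → a n k ≤ a n 1 ∧ b n k ≤ b n 1 := by
  intro n
  induction n with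
  | zero =>
    intro k hk1 hk2
    interval_cases k
    exact ⟨le_refl _, le_refl _⟩
  | succ n ih =>
    intro k hk1 hk2
    obtain ⟨ha1, hb1⟩ := hrec₁ n 1 le_rfl (Nat.one_le_two_pow)
    by_cases h : k ≤ 2 ^ n
    · obtain ⟨hak, hbk⟩ := hrec₁ n k hk1 h
      obtain ⟨iha, ihb⟩ := ih k hk1 h
      constructor
      · rw [hak, ha1]; exact Nat.add_le_add iha ihb
      · rw [hbk, hb1]; exact iha
    · push_neg at h
      obtain ⟨hak, hbk⟩ := hrec₂ n k h hk2
      have hk1' : 1 ≤ k - 2 ^ n := Nat.le_sub_of_add_le (by omega)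
      have hk2' : k - 2 ^ n ≤ 2 ^ n := by
        have : 2 ^ (n + 1) = 2 ^ n + 2 ^ n := by ring
        omega
      obtain ⟨iha, ihb⟩ := ih (k - 2 ^ n) hk1' hk2'
      constructor
      · rw [hak, ha1]; exact le_trans ihb (Nat.le_add_left _ _)
      · rw [hbk, hb1]; exact iha
end

section
/- Let a, b be the coefficient-pair arrays of the multi-level recursion, set c_n = ∏_{k=1}^{2^n} (a(n,k) + b(n,k)), and let F_n denote the Fibonacci numbers with F_0 = 0, F_1 = 1. Then c_n ≤ (F_{n+4})^{2^n} for all n ≥ 0. -/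
open Finset

lemma fib_aux (m : ℕ) : Nat.fib (m + 4) = Nat.fib (m + 3) + Nat.fib (m + 2) := by
  rw [show m + 4 = m + 2 + 2 from rfl, Nat.fib_add_two,
    show m + 2 + 1 = m + 3 from rfl]; ring

/-- The crude estimate `c_n ≤ (F_{n+4})^{2^n}` where
`c_n = ∏_{k=1}^{2^n} (a(n,k) + b(n,k))` and `F` is the Fibonacci sequence. -/
theorem multilevel_c_le_fib_pow
    (a b : ℕ → ℕ → ℕ)
    (ha0 : a 0 1 = 2) (hb0 : b 0 1 = 1)
    (hrec₁ : ∀ n k, 1 ≤ k → k ≤ 2 ^ n →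
      a (n + 1) k = a n k + b n k ∧ b (n + 1) k = a n k)
    (hrec₂ : ∀ n k, 2 ^ n + 1 ≤ k → k ≤ 2 ^ (n + 1) →
      a (n + 1) k = b n (k - 2 ^ n) ∧ b (n + 1) k = a n (k - 2 ^ n))
    (c : ℕ → ℕ)
    (hc : ∀ n, c n = ∏ k ∈ Finset.Icc 1 (2 ^ n), (a n k + b n k)) :
    ∀ n : ℕ, c n ≤ Nat.fib (n + 4) ^ 2 ^ n := by
  have key : ∀ n k, 1 ≤ k → k ≤ 2 ^ n →
      a n k ≤ Nat.fib (n + 3) ∧ b n k ≤ Nat.fib (n + 2) := by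
    intro n
    induction n with
    | zero =>
      intro k h1 h2
      interval_cases k
      refine ⟨?_, ?_⟩ <;> simp [ha0, hb0] <;> decide
    | succ m ih =>
      intro k h1 h2
      have hf3 := fib_aux m
      have hf2 : Nat.fib (m + 3) = Nat.fib (m + 2) + Nat.fib (m + 1) := by
        rw [show m + 3 = m + 1 + 2 from rfl, Nat.fib_add_two,
          show m + 1 + 1 = m + 2 from rfl]; ring
      by_cases hk : k ≤ 2 ^ m
      · obtain ⟨ha, hb⟩ := hrec₁ m k h1 hk
        obtain ⟨iha, ihb⟩ := ih k h1 hk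
        refine ⟨?_, ?_⟩
        · rw [ha, show m + 1 + 3 = m + 4 from rfl]; omega
        · rw [hb, show m + 1 + 2 = m + 3 from rfl]; omega
      · obtain ⟨ha, hb⟩ := hrec₂ m k (by omega) h2
        have h1' : 1 ≤ k - 2 ^ m := by omega
        have h2' : k - 2 ^ m ≤ 2 ^ m := by
          have : 2 ^ (m + 1) = 2 ^ m + 2 ^ m := by ring
          omega
        obtain ⟨iha, ihb⟩ := ih (k - 2 ^ m) h1' h2'
        refine ⟨?_, ?_⟩
        · rw [ha, show m + 1 + 3 = m + 4 from rfl]; omega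
        · rw [hb, show m + 1 + 2 = m + 3 from rfl]; omega
  intro n
  rw [hc n]
  have hcard : (Finset.Icc 1 (2 ^ n)).card = 2 ^ n := by
    rw [Nat.card_Icc]; simp
  calc ∏ k ∈ Finset.Icc 1 (2 ^ n), (a n k + b n k)
      ≤ ∏ _k ∈ Finset.Icc 1 (2 ^ n), Nat.fib (n + 4) := by
        apply Finset.prod_le_prod
        · intro i _; positivity
        · intro i hi
          rw [Finset.mem_Icc] at hi
          obtain ⟨ha, hb⟩ := key n i hi.1 hi.2
          have := fib_aux n
          omega
    _ = Nat.fib (n + 4) ^ 2 ^ n := by rw [Finset.prod_const, hcard]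
end
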